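/- arXiv:2403.04630 — 4 statements merged into one kernel-verified Lean document; each statement's English description precedes it below -/
import Mathlib

section
/- Let k, ℓ ∈ ℕ ∪ {0}. Let G be a finite directed acyclic graph with at most ℓ + 1 vertices, and fix a topological ordering v_1, ..., v_n of its vertices (so every edge goes from a lower-indexed vertex to a higher-indexed vertex). Suppose that for every i ∈ {1, ..., n−1}, the i-th order-induced cut set — the set of edges (v_j, v_{j'}) with j ≤ i < j' — contains at most k edges. Then G has at most 2ℓ√k edges. -/
/-- number of edges in a structured DAG.
Let `k, ℓ ∈ ℕ`.  Let `G` be a finite DAG with `n ≤ ℓ + 1` vertices, given in a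
topological ordering `v_1, …, v_n` (modelled as `Fin n`, every edge going from a
lower-indexed to a higher-indexed vertex).  If for every `i ∈ {1, …, n − 1}` the `i`-th
order-induced cut set — the set of edges `(v_j, v_{j'})` with `j ≤ i < j'` — has at most
`k` edges, then `G` has at most `2ℓ√k` edges.

Here a vertex `a : Fin n` represents `v_{a+1}`, so an edge `(a, b)` crosses the `i`-th
order-induced cut iff `a + 1 ≤ i ∧ i ≤ b`. -/
theorem structured_dag_edge_count (k ℓ n : ℕ) (hn : n ≤ ℓ + 1)
    (E : Finset (Fin n × Fin n)) (hE : ∀ e ∈ E, e.1 < e.2)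
    (hcut : ∀ i : ℕ, 1 ≤ i → i ≤ n - 1 →
      (E.filter fun e => (e.1 : ℕ) + 1 ≤ i ∧ i ≤ (e.2 : ℕ)).card ≤ k) :
    (E.card : ℝ) ≤ 2 * (ℓ : ℝ) * Real.sqrt (k : ℝ) := by
  set t := Nat.sqrt k with ht
  set S := E.filter (fun e => (e.2 : ℕ) - (e.1 : ℕ) ≤ t) with hSdef
  set L := E.filter (fun e => ¬ ((e.2 : ℕ) - (e.1 : ℕ) ≤ t)) with hLdef
  have hsplit : S.card + L.card = E.card :=
    Finset.card_filter_add_card_filter_not _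
  -- short edges
  have hS : S.card ≤ ℓ * t := by
    have hinj : S.card ≤ ((Finset.range (n - 1)) ×ˢ (Finset.range t)).card := by
      apply Finset.card_le_card_of_injOn
        (fun e => ((e.1 : ℕ), (e.2 : ℕ) - (e.1 : ℕ) - 1))
      · intro e he
        rw [hSdef, Finset.mem_coe, Finset.mem_filter] at he
        have h1 := hE e he.1
        have h2 := he.2
        have hb : (e.2 : ℕ) < n := e.2.isLt
        have h1' : (e.1 : ℕ) < (e.2 : ℕ) := h1
        simp only [Finset.coe_product, Set.mem_prod, Finset.mem_coe, Finset.mem_range]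
        omega
      · intro e1 h1 e2 h2 heq
        simp only [hSdef, Finset.mem_coe, Finset.mem_filter] at h1 h2
        have l1 : (e1.1 : ℕ) < (e1.2 : ℕ) := hE e1 h1.1
        have l2 : (e2.1 : ℕ) < (e2.2 : ℕ) := hE e2 h2.1
        simp only [Prod.mk.injEq] at heq
        have ha : (e1.1 : ℕ) = (e2.1 : ℕ) := heq.1
        have hb : (e1.2 : ℕ) = (e2.2 : ℕ) := by omega
        exact Prod.ext (Fin.ext ha) (Fin.ext hb)
    have hcard : ((Finset.range (n - 1)) ×ˢ (Finset.range t)).card = (n - 1) * t := by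
      simp [Finset.card_product]
    rw [hcard] at hinj
    exact hinj.trans (Nat.mul_le_mul_right t (by omega))
  -- total length bound via double counting
  have hsum : ∑ e ∈ E, ((e.2 : ℕ) - (e.1 : ℕ)) ≤ ℓ * k := by
    have h1 : ∑ e ∈ E, ((e.2 : ℕ) - (e.1 : ℕ)) =
        ∑ i ∈ Finset.Icc 1 (n - 1),
          (E.filter fun e => (e.1 : ℕ) + 1 ≤ i ∧ i ≤ (e.2 : ℕ)).card := by
      simp_rw [Finset.card_filter]
      rw [Finset.sum_comm]
      apply Finset.sum_congr rfl
      intro e he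
      have h1' : (e.1 : ℕ) < (e.2 : ℕ) := hE e he
      have hb : (e.2 : ℕ) < n := e.2.isLt
      have : (Finset.Icc 1 (n - 1)).filter
          (fun i => (e.1 : ℕ) + 1 ≤ i ∧ i ≤ (e.2 : ℕ)) =
          Finset.Icc ((e.1 : ℕ) + 1) (e.2 : ℕ) := by
        ext i
        simp only [Finset.mem_filter, Finset.mem_Icc]
        omega
      rw [Finset.sum_ite, Finset.sum_const, Finset.sum_const, this, Nat.card_Icc]
      simp
    rw [h1]
    calc ∑ i ∈ Finset.Icc 1 (n - 1),
          (E.filter fun e => (e.1 : ℕ) + 1 ≤ i ∧ i ≤ (e.2 : ℕ)).card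
        ≤ ∑ _i ∈ Finset.Icc 1 (n - 1), k := by
          apply Finset.sum_le_sum
          intro i hi
          rw [Finset.mem_Icc] at hi
          exact hcut i hi.1 hi.2
      _ = (n - 1) * k := by
          rw [Finset.sum_const, Nat.card_Icc, smul_eq_mul]
          congr 1
      _ ≤ ℓ * k := Nat.mul_le_mul_right k (by omega)
  -- long edges
  have hL : L.card * (t + 1) ≤ ℓ * k := by
    have h1 : L.card * (t + 1) ≤ ∑ e ∈ L, ((e.2 : ℕ) - (e.1 : ℕ)) := by
      rw [Finset.card_eq_sum_ones, Finset.sum_mul, one_mul]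
      apply Finset.sum_le_sum
      intro e he
      rw [hLdef, Finset.mem_filter] at he
      omega
    have h2 : ∑ e ∈ L, ((e.2 : ℕ) - (e.1 : ℕ)) ≤ ∑ e ∈ E, ((e.2 : ℕ) - (e.1 : ℕ)) :=
      Finset.sum_le_sum_of_subset (Finset.filter_subset _ _)
    omega
  -- pass to reals
  have hsqrt_nonneg : (0 : ℝ) ≤ Real.sqrt k := Real.sqrt_nonneg _
  have htle : (t : ℝ) ≤ Real.sqrt k := by
    have hnat : t * t ≤ k := by simpa [pow_two] using Nat.sqrt_le' k
    have h' : (t : ℝ) * t ≤ (k : ℝ) := by exact_mod_cast hnat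
    have heq : (t : ℝ) = Real.sqrt ((t : ℝ) * t) := (Real.sqrt_mul_self (by positivity)).symm
    rw [heq]
    exact Real.sqrt_le_sqrt h'
  have htgt : Real.sqrt k ≤ (t : ℝ) + 1 := by
    have hk2 : k < (t + 1) * (t + 1) := by
      have := Nat.lt_succ_sqrt' k
      simpa [pow_two, Nat.succ_eq_add_one] using this
    have hk : (k : ℝ) ≤ ((t : ℝ) + 1) * ((t : ℝ) + 1) := by
      exact_mod_cast hk2.le
    calc Real.sqrt k ≤ Real.sqrt (((t : ℝ) + 1) * ((t : ℝ) + 1)) := Real.sqrt_le_sqrt hk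
      _ = (t : ℝ) + 1 := Real.sqrt_mul_self (by positivity)
  have hSr : (S.card : ℝ) ≤ (ℓ : ℝ) * Real.sqrt k := by
    calc (S.card : ℝ) ≤ ((ℓ * t : ℕ) : ℝ) := Nat.cast_le.2 hS
      _ = (ℓ : ℝ) * t := by push_cast; ring
      _ ≤ (ℓ : ℝ) * Real.sqrt k := by
          apply mul_le_mul_of_nonneg_left htle (by positivity)
  have hLr : (L.card : ℝ) ≤ (ℓ : ℝ) * Real.sqrt k := by
    have h1 : (L.card : ℝ) * ((t : ℝ) + 1) ≤ (ℓ : ℝ) * k := by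
      have := (Nat.cast_le (α := ℝ)).2 hL
      push_cast at this
      linarith
    have h2 : (ℓ : ℝ) * k ≤ (ℓ : ℝ) * Real.sqrt k * ((t : ℝ) + 1) := by
      have hk : Real.sqrt k * Real.sqrt k = (k : ℝ) := Real.mul_self_sqrt (by positivity)
      nlinarith [Nat.cast_nonneg (α := ℝ) ℓ, hsqrt_nonneg, htgt]
    have hpos : (0 : ℝ) < (t : ℝ) + 1 := by positivity
    exact le_of_mul_le_mul_right (h1.trans h2) hpos
  have : (E.card : ℝ) = (S.card : ℝ) + (L.card : ℝ) := by
    rw [← hsplit]; push_cast; ring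
  rw [this]
  linarith
end

section
/- (Privacy of Propose-Test-Release under continual observation.) Let X be a set, T ∈ ℕ, ≃ a symmetric neighbor relation on X^T, Z ⊆ X^T, and Y a measurable space. Let Test assign to each x ∈ X^T a probability measure on {⊥,⊤}^T and let Base assign to each x ∈ X^T a probability measure on Y^T; assume both are streaming algorithms, i.e., for each t ∈ [T] the marginal distribution of the first t outputs depends only on the first t entries of the input. Define PTR(x) as the distribution of the pair (v, ỹ) where v ~ Test(x) and y ~ Base(x) are drawn independently, and ỹ_t = y_t for t < t_⊥(v) and ỹ_t = ⊥ for t ≥ t_⊥(v), where t_⊥(v) is the first index at which v equals ⊥ (t_⊥(v) = T + 1 if v never equals ⊥). Suppose: (i) for every t ∈ [T] and every pair of neighboring streams x ≃ x' whose prefixes x_[t] and x'_[t] each equal the t-element prefix of some element of Z, the marginals of the first t outputs of Base on x and x' are (ε_Base, δ_Base)-indistinguishable; (ii) for every pair of neighboring streams x ≃ x', Test(x) and Test(x') are (ε_Test, δ_Test)-indistinguishable; (iii) for every stream x and every t ∈ [T], if x_[t] does not equal the t-element prefix of any element of Z, then with probability at least 1 − β_Test over v ~ Test(x), t_⊥(v)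 ≤ t. Then for every pair of neighboring streams x ≃ x' in X^T, PTR(x) and PTR(x') are (ε, δ)-indistinguishable with ε = ε_Base + ε_Test and δ = δ_Base + (1 + e^{ε_Base + ε_Test})·δ_Test + (1 + e^{ε_Test})·e^{ε_Base + ε_Test}·β_Test. -/
open MeasureTheory

/-- Two measures are `(ε, δ)`-indistinguishable if, for every measurable set `Y`,
`P(Y) ≤ e^ε · Q(Y) + δ` and `Q(Y) ≤ e^ε · P(Y) + δ`. -/
def Indist {Ω : Type*} [MeasurableSpace Ω] (ε δ : ℝ) (P Q : Measure Ω) : Prop :=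
  ∀ Y : Set Ω, MeasurableSet Y →
    P Y ≤ ENNReal.ofReal (Real.exp ε) * Q Y + ENNReal.ofReal δ ∧
    Q Y ≤ ENNReal.ofReal (Real.exp ε) * P Y + ENNReal.ofReal δ


/-- The natural measurable-space structure on `Option α`, transported from `α ⊕ PUnit`. -/
instance {α : Type*} [MeasurableSpace α] : MeasurableSpace (Option α) :=
  MeasurableSpace.comap (Equiv.optionEquivSumPUnit.{0, _} α) inferInstance

/-- The map restricting a sequence of outputs to its first `t` entries
(entries with index `≥ t` are masked by `none`). -/
def prefixMask {α : Type*} (T : ℕ) (t : ℕ) (y : Fin T → α) : Fin T → Option α :=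
  fun s => if (s : ℕ) < t then some (y s) else none

/-- `x_[t]` equals the `t`-element prefix of some element of `Z`. -/
def PrefixInZ {X : Type*} (T : ℕ) (Z : Set (Fin T → X)) (t : ℕ) (x : Fin T → X) : Prop :=
  ∃ z ∈ Z, ∀ s : Fin T, (s : ℕ) < t → x s = z s

/-- The Propose-Test-Release mechanism: run `Test` and `Base` independently and release
the verdict stream `v` together with the output stream of `Base`, cut off from the first
time at which `Test` outputs `⊥` (here `false`) onwards. -/
noncomputable def PTR {X Y : Type*} [MeasurableSpace Y] (T : ℕ)
    (Test : (Fin T → X) → Measure (Fin T → Bool))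
    (Base : (Fin T → X) → Measure (Fin T → Y))
    (x : Fin T → X) : Measure ((Fin T → Bool) × (Fin T → Option Y)) :=
  Measure.map
    (fun p : (Fin T → Bool) × (Fin T → Y) =>
      (p.1, fun t : Fin T => if ∀ s : Fin T, s ≤ t → p.1 s = true then some (p.2 t) else none))
    ((Test x).prod (Base x))

lemma measurable_some' {α : Type*} [MeasurableSpace α] :
    Measurable (fun a : α => (some a : Option α)) := by
  intro s hs
  obtain ⟨t, ht, rfl⟩ := hs
  have h : (fun a : α => (some a : Option α)) ⁻¹' ((Equiv.optionEquivSumPUnit.{0,_} α) ⁻¹' t)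
      = Sum.inl ⁻¹' t := by
    ext a; simp [Equiv.optionEquivSumPUnit]
  rw [h]; exact measurable_inl ht

lemma meas_finset {Ω : Type*} [MeasurableSpace Ω] [MeasurableSingletonClass Ω]
    (μ : Measure Ω) (s : Finset Ω) : μ ↑s = ∑ v ∈ s, μ {v} := by
  have h : (↑s : Set Ω) = ⋃ v ∈ s, {v} := by
    ext a; simp
  rw [h, measure_biUnion_finset ?_ (fun v _ => measurableSet_singleton v)]
  intro a _ b _ hab
  simp only [Function.onFun, Set.disjoint_singleton_left, Set.mem_singleton_iff]
  exact hab

lemma indist_self {Ω : Type*} [MeasurableSpace Ω] {ε δ : ℝ} (hε : 0 ≤ ε)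
    (P : Measure Ω) : Indist ε δ P P := by
  intro A _
  have h1 : (1:ENNReal) ≤ ENNReal.ofReal (Real.exp ε) := by
    rw [ENNReal.one_le_ofReal]; exact Real.one_le_exp hε
  constructor <;>
  · calc P A = 1 * P A := (one_mul _).symm
      _ ≤ ENNReal.ofReal (Real.exp ε) * P A := by gcongr
      _ ≤ _ := le_self_add

lemma sum_indist {Ω : Type*} [Fintype Ω] [MeasurableSpace Ω] [MeasurableSingletonClass Ω]
    (P Q : Measure Ω) [IsFiniteMeasure Q] {ε δ : ℝ}
    (h : Indist ε δ P Q) (g : Ω → ENNReal) (hg : ∀ v, g v ≤ 1) :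
    ∑ v, g v * P {v} ≤ ENNReal.ofReal (Real.exp ε) * ∑ v, g v * Q {v} + ENNReal.ofReal δ := by
  classical
  set E := ENNReal.ofReal (Real.exp ε) with hE
  set S : Finset Ω := Finset.univ.filter (fun v => E * Q {v} < P {v}) with hS
  have hEne : E ≠ ⊤ := ENNReal.ofReal_ne_top
  have hsum_ne : ∑ v ∈ S, E * Q {v} ≠ ⊤ := by
    refine ENNReal.sum_ne_top.mpr fun v _ => ?_
    exact ENNReal.mul_ne_top hEne (measure_ne_top Q _)
  have hstep : ∀ v, g v * P {v} ≤ g v * (E * Q {v}) + (P {v} - E * Q {v}) := by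
    intro v
    calc g v * P {v} ≤ g v * (E * Q {v} + (P {v} - E * Q {v})) := by
          gcongr; exact le_add_tsub
      _ = g v * (E * Q {v}) + g v * (P {v} - E * Q {v}) := mul_add _ _ _
      _ ≤ g v * (E * Q {v}) + 1 * (P {v} - E * Q {v}) := by gcongr; exact hg v
      _ = _ := by rw [one_mul]
  have hsub : ∑ v, (P {v} - E * Q {v}) ≤ ENNReal.ofReal δ := by
    have hz : ∀ v ∈ Finset.univ, v ∉ S → P {v} - E * Q {v} = 0 := by
      intro v _ hv
      refine tsub_eq_zero_of_le ?_
      simpa [hS, not_lt] using hv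
    rw [← Finset.sum_subset (Finset.subset_univ S) hz]
    have hle : ∀ v ∈ S, E * Q {v} ≤ P {v} := by
      intro v hv; exact le_of_lt (by simpa [hS] using hv)
    have hP : ∑ v ∈ S, P {v} ≤ (∑ v ∈ S, E * Q {v}) + ENNReal.ofReal δ := by
      have hSm : MeasurableSet (↑S : Set Ω) := S.finite_toSet.measurableSet
      have := (h ↑S hSm).1
      rw [meas_finset, meas_finset] at this
      calc ∑ v ∈ S, P {v} ≤ E * ∑ v ∈ S, Q {v} + ENNReal.ofReal δ := this
        _ = (∑ v ∈ S, E * Q {v}) + ENNReal.ofReal δ := by rw [Finset.mul_sum]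
    have key : (∑ v ∈ S, (P {v} - E * Q {v})) + ∑ v ∈ S, E * Q {v}
        ≤ ENNReal.ofReal δ + ∑ v ∈ S, E * Q {v} := by
      rw [← Finset.sum_add_distrib]
      calc ∑ v ∈ S, (P {v} - E * Q {v} + E * Q {v}) = ∑ v ∈ S, P {v} := by
            refine Finset.sum_congr rfl fun v hv => ?_
            exact tsub_add_cancel_of_le (hle v hv)
        _ ≤ (∑ v ∈ S, E * Q {v}) + ENNReal.ofReal δ := hP
        _ = ENNReal.ofReal δ + ∑ v ∈ S, E * Q {v} := by rw [add_comm]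
    exact (ENNReal.add_le_add_iff_right hsum_ne).mp key
  calc ∑ v, g v * P {v} ≤ ∑ v, (g v * (E * Q {v}) + (P {v} - E * Q {v})) :=
        Finset.sum_le_sum fun v _ => hstep v
    _ = ∑ v, g v * (E * Q {v}) + ∑ v, (P {v} - E * Q {v}) := Finset.sum_add_distrib
    _ ≤ E * ∑ v, g v * Q {v} + ENNReal.ofReal δ := by
        have hre : ∑ v, g v * (E * Q {v}) = E * ∑ v, g v * Q {v} := by
          rw [Finset.mul_sum]
          exact Finset.sum_congr rfl fun v _ => by ring
        rw [hre]
        exact add_le_add le_rfl hsub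

lemma measurable_prefixMask {α : Type*} [MeasurableSpace α] (T t : ℕ) :
    Measurable (prefixMask (α := α) T t) := by
  refine measurable_pi_lambda _ fun s => ?_
  unfold prefixMask
  by_cases h : (s : ℕ) < t
  · simp only [h, if_true]
    exact measurable_some'.comp (measurable_pi_apply s)
  · simp only [h, if_false]
    exact measurable_const

lemma measurable_maskF {Y : Type*} [MeasurableSpace Y] (T : ℕ) :
    Measurable (fun p : (Fin T → Bool) × (Fin T → Y) =>
      ((p.1, fun t : Fin T => if ∀ s : Fin T, s ≤ t → p.1 s = true then some (p.2 t) else none) :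
        (Fin T → Bool) × (Fin T → Option Y))) := by
  refine measurable_fst.prodMk (measurable_pi_lambda _ fun t => ?_)
  refine Measurable.ite ?_ (measurable_some'.comp ((measurable_pi_apply t).comp measurable_snd))
    measurable_const
  exact measurable_fst ((Set.toFinite {v : Fin T → Bool | ∀ s : Fin T, s ≤ t → v s = true}).measurableSet)

lemma measurable_remask {Y : Type*} [MeasurableSpace Y] (T : ℕ) :
    Measurable (fun q : (Fin T → Bool) × (Fin T → Option Y) =>
      ((q.1, fun t : Fin T => if ∀ s : Fin T, s ≤ t → q.1 s = true then q.2 t else none) :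
        (Fin T → Bool) × (Fin T → Option Y))) := by
  refine measurable_fst.prodMk (measurable_pi_lambda _ fun t => ?_)
  refine Measurable.ite ?_ ((measurable_pi_apply t).comp measurable_snd) measurable_const
  exact measurable_fst ((Set.toFinite {v : Fin T → Bool | ∀ s : Fin T, s ≤ t → v s = true}).measurableSet)

lemma one_sided
    {X Y : Type*} [MeasurableSpace Y] (T : ℕ)
    (Neighbor : (Fin T → X) → (Fin T → X) → Prop)
    (Z : Set (Fin T → X))
    (Test : (Fin T → X) → Measure (Fin T → Bool))
    (Base : (Fin T → X) → Measure (Fin T → Y))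
    (hTestProb : ∀ x, IsProbabilityMeasure (Test x))
    (hBaseProb : ∀ x, IsProbabilityMeasure (Base x))
    (ε_Base δ_Base ε_Test δ_Test β_Test : ℝ)
    (hεB : 0 ≤ ε_Base) (hδB : 0 ≤ δ_Base) (hεT : 0 ≤ ε_Test) (hδT : 0 ≤ δ_Test)
    (hβ : 0 ≤ β_Test)
    (hBase : ∀ t : ℕ, 1 ≤ t → t ≤ T → ∀ x x' : Fin T → X, Neighbor x x' →
      PrefixInZ T Z t x → PrefixInZ T Z t x' →
      Indist ε_Base δ_Base
        (Measure.map (prefixMask T t) (Base x)) (Measure.map (prefixMask T t) (Base x')))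
    (hTest : ∀ x x' : Fin T → X, Neighbor x x' → Indist ε_Test δ_Test (Test x) (Test x'))
    (hSound : ∀ (x : Fin T → X) (t : ℕ), 1 ≤ t → t ≤ T → ¬ PrefixInZ T Z t x →
      ENNReal.ofReal (1 - β_Test)
        ≤ Test x {v | ∃ s : Fin T, (s : ℕ) < t ∧ v s = false})
    (x x' : Fin T → X) (hnb : Neighbor x x')
    (A : Set ((Fin T → Bool) × (Fin T → Option Y))) (hA : MeasurableSet A) :
    PTR T Test Base x A ≤ ENNReal.ofReal (Real.exp (ε_Base + ε_Test)) * PTR T Test Base x' A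
      + ENNReal.ofReal (δ_Base + (1 + Real.exp (ε_Base + ε_Test)) * δ_Test
          + (1 + Real.exp ε_Test) * Real.exp (ε_Base + ε_Test) * β_Test) := by
  classical
  haveI := hTestProb x; haveI := hTestProb x'; haveI := hBaseProb x; haveI := hBaseProb x'
  set E_T := ENNReal.ofReal (Real.exp ε_Test) with hET
  set E_B := ENNReal.ofReal (Real.exp ε_Base) with hEB
  have hET1 : (1 : ENNReal) ≤ E_T := by
    rw [hET, ENNReal.one_le_ofReal]; exact Real.one_le_exp hεT
  -- the cut-off time
  set Pr : ℕ → Prop := fun t => t = 0 ∨ (PrefixInZ T Z t x ∧ PrefixInZ T Z t x') with hPr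
  set t0 := Nat.findGreatest Pr T with ht0def
  have ht0T : t0 ≤ T := Nat.findGreatest_le T
  have hPt0 : Pr t0 := Nat.findGreatest_spec (Nat.zero_le T) (Or.inl rfl)
  -- base indistinguishability at the cut-off time
  have hBB' : Indist ε_Base δ_Base (Measure.map (prefixMask T t0) (Base x))
      (Measure.map (prefixMask T t0) (Base x')) := by
    by_cases h0 : t0 = 0
    · have he : (prefixMask T t0 : (Fin T → Y) → _) = fun _ => (fun _ => (none : Option Y)) := by
        funext y s; simp [prefixMask, h0]
      rw [he, Measure.map_const, Measure.map_const, measure_univ, measure_univ]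
      exact indist_self hεB _
    · rcases hPt0 with h | ⟨hzx, hzx'⟩
      · exact absurd h h0
      · exact hBase t0 (Nat.one_le_iff_ne_zero.mpr h0) ht0T x x' hnb hzx hzx'
  -- the bad event
  set K : Set (Fin T → Bool) := {v | t0 < T ∧ ∀ s : Fin T, (s : ℕ) < t0 + 1 → v s = true}
    with hKdef
  have hKmeas : MeasurableSet K := (Set.toFinite K).measurableSet
  have hKsmall : Test x K ≤ E_T * ENNReal.ofReal β_Test + ENNReal.ofReal δ_Test := by
    by_cases hT : t0 < T
    · have hnotP : ¬ Pr (t0 + 1) :=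
        Nat.findGreatest_is_greatest (n := T) (ht0def ▸ lt_add_one t0) (by omega)
      have key : ∀ x'' : Fin T → X, ¬ PrefixInZ T Z (t0 + 1) x'' →
          Test x'' K ≤ ENNReal.ofReal β_Test := by
        intro x'' hx''
        haveI := hTestProb x''
        have hs := hSound x'' (t0 + 1) (by omega) (by omega) hx''
        set S : Set (Fin T → Bool) := {v | ∃ s : Fin T, (s : ℕ) < t0 + 1 ∧ v s = false} with hSdef
        have hcompl : K = Sᶜ := by
          ext v
          simp only [hKdef, hSdef, Set.mem_setOf_eq, Set.mem_compl_iff, not_exists, not_and]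
          constructor
          · rintro ⟨-, h⟩ s hs'
            simp [h s hs']
          · intro h
            refine ⟨hT, fun s hs' => ?_⟩
            have := h s hs'
            revert this; cases v s <;> simp
        have hSm : MeasurableSet S := (Set.toFinite S).measurableSet
        have h1 : Test x'' S + Test x'' Sᶜ = 1 := by
          rw [measure_add_measure_compl hSm, measure_univ]
        have h2 : Test x'' S + Test x'' Sᶜ ≤ Test x'' S + ENNReal.ofReal β_Test := by
          rw [h1]
          calc (1 : ENNReal) = ENNReal.ofReal ((1 - β_Test) + β_Test) := by norm_num
            _ ≤ ENNReal.ofReal (1 - β_Test) + ENNReal.ofReal β_Test := ENNReal.ofReal_add_le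
            _ ≤ Test x'' S + ENNReal.ofReal β_Test := by gcongr
        rw [hcompl]
        exact (ENNReal.add_le_add_iff_left (measure_ne_top _ _)).mp h2
      have : ¬ (PrefixInZ T Z (t0 + 1) x ∧ PrefixInZ T Z (t0 + 1) x') := by
        intro hc; exact hnotP (Or.inr hc)
      rcases not_and_or.mp this with hx | hx'
      · calc Test x K ≤ ENNReal.ofReal β_Test := key x hx
          _ = 1 * ENNReal.ofReal β_Test := (one_mul _).symm
          _ ≤ E_T * ENNReal.ofReal β_Test := by gcongr
          _ ≤ _ := le_self_add
      · calc Test x K ≤ E_T * Test x' K + ENNReal.ofReal δ_Test := (hTest x x' hnb K hKmeas).1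
          _ ≤ E_T * ENNReal.ofReal β_Test + ENNReal.ofReal δ_Test := by
              gcongr
              exact key x' hx'
    · have hKe : K = ∅ := by
        ext v; simp [hKdef, hT]
      simp [hKe]
  -- the PTR map and the reduced set
  set F : (Fin T → Bool) × (Fin T → Y) → (Fin T → Bool) × (Fin T → Option Y) :=
    fun p => (p.1, fun t : Fin T => if ∀ s : Fin T, s ≤ t → p.1 s = true
      then some (p.2 t) else none) with hFdef
  have hF : Measurable F := measurable_maskF T
  set rm : (Fin T → Bool) × (Fin T → Option Y) → (Fin T → Bool) × (Fin T → Option Y) :=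
    fun q => (q.1, fun t : Fin T => if ∀ s : Fin T, s ≤ t → q.1 s = true
      then q.2 t else none) with hrmdef
  have hrm : Measurable rm := measurable_remask T
  set At : Set ((Fin T → Bool) × (Fin T → Option Y)) := {q | q.1 ∉ K ∧ rm q ∈ A} with hAtdef
  have hAtmeas : MeasurableSet At := by
    have h1 : MeasurableSet {q : (Fin T → Bool) × (Fin T → Option Y) | q.1 ∉ K} :=
      measurable_fst hKmeas.compl
    exact h1.inter (hrm hA)
  -- the key pointwise identity outside the bad event
  have hmask : ∀ v : Fin T → Bool, v ∉ K → ∀ y : Fin T → Y,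
      (fun t : Fin T => if ∀ s : Fin T, s ≤ t → v s = true then some (y t) else none)
        = (fun t : Fin T => if ∀ s : Fin T, s ≤ t → v s = true
            then prefixMask T t0 y t else none) := by
    intro v hv y
    funext t
    by_cases hC : ∀ s : Fin T, s ≤ t → v s = true
    · have htlt : (t : ℕ) < t0 := by
        by_cases hT : t0 < T
        · have hne : ¬ ∀ s : Fin T, (s : ℕ) < t0 + 1 → v s = true := fun h => hv ⟨hT, h⟩
          push_neg at hne
          obtain ⟨s, hs1, hs2⟩ := hne
          have hts : ¬ s ≤ t := fun h => hs2 (hC s h)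
          rw [not_le, Fin.lt_def] at hts
          omega
        · have := t.isLt; omega
      simp [hC, prefixMask, htlt]
    · simp [hC]
  -- rewriting the restricted measure through the prefix map
  have hEq : ∀ x₀ : Fin T → X,
      ((Test x₀).prod (Base x₀)) (F ⁻¹' A ∩ {p | p.1 ∉ K})
        = ((Test x₀).prod (Measure.map (prefixMask T t0) (Base x₀))) At := by
    intro x₀
    haveI := hTestProb x₀; haveI := hBaseProb x₀
    have hprodmap : (Test x₀).prod (Measure.map (prefixMask T t0) (Base x₀))
        = Measure.map (Prod.map id (prefixMask T t0)) ((Test x₀).prod (Base x₀)) := by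
      rw [← Measure.map_prod_map _ _ measurable_id (measurable_prefixMask T t0),
        Measure.map_id]
    rw [hprodmap, Measure.map_apply (measurable_id.prodMap (measurable_prefixMask T t0)) hAtmeas]
    congr 1
    ext p
    simp only [Set.mem_inter_iff, Set.mem_preimage, Set.mem_setOf_eq, hAtdef, Prod.map,
      id_eq, hrmdef, hFdef]
    constructor
    · rintro ⟨hpA, hpK⟩
      refine ⟨hpK, ?_⟩
      rw [← hmask p.1 hpK p.2]
      exact hpA
    · rintro ⟨hpK, hpA⟩
      refine ⟨?_, hpK⟩
      rw [hmask p.1 hpK p.2]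
      exact hpA
  -- composition bound on the reduced set
  set Bx := Measure.map (prefixMask T t0) (Base x) with hBxdef
  set Bx' := Measure.map (prefixMask T t0) (Base x') with hBx'def
  haveI : IsProbabilityMeasure Bx :=
    Measure.isProbabilityMeasure_map (measurable_prefixMask T t0).aemeasurable
  haveI : IsProbabilityMeasure Bx' :=
    Measure.isProbabilityMeasure_map (measurable_prefixMask T t0).aemeasurable
  have hcomp : ((Test x).prod Bx) At
      ≤ E_B * (E_T * (((Test x').prod Bx') At) + ENNReal.ofReal δ_Test)
        + ENNReal.ofReal δ_Base := by
    have hsec : ∀ v : Fin T → Bool, MeasurableSet (Prod.mk v ⁻¹' At) :=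
      fun v => measurable_prodMk_left hAtmeas
    rw [Measure.prod_apply hAtmeas, lintegral_fintype]
    have hsum1 : ∑ v : Fin T → Bool, Test x {v} = 1 := by
      rw [← meas_finset (Test x) Finset.univ, Finset.coe_univ, measure_univ]
    calc ∑ v : Fin T → Bool, Bx (Prod.mk v ⁻¹' At) * Test x {v}
        ≤ ∑ v : Fin T → Bool, (E_B * Bx' (Prod.mk v ⁻¹' At) + ENNReal.ofReal δ_Base)
            * Test x {v} := by
          refine Finset.sum_le_sum fun v _ => ?_
          gcongr
          exact (hBB' _ (hsec v)).1
      _ = ∑ v : Fin T → Bool, E_B * (Bx' (Prod.mk v ⁻¹' At) * Test x {v})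
          + ENNReal.ofReal δ_Base * ∑ v : Fin T → Bool, Test x {v} := by
          rw [Finset.mul_sum, ← Finset.sum_add_distrib]
          exact Finset.sum_congr rfl fun v _ => by ring
      _ = E_B * ∑ v : Fin T → Bool, Bx' (Prod.mk v ⁻¹' At) * Test x {v}
          + ENNReal.ofReal δ_Base := by
          rw [hsum1, mul_one, Finset.mul_sum]
      _ ≤ E_B * (E_T * (∑ v : Fin T → Bool, Bx' (Prod.mk v ⁻¹' At) * Test x' {v})
            + ENNReal.ofReal δ_Test) + ENNReal.ofReal δ_Base := by
          gcongr
          exact sum_indist (Test x) (Test x') (hTest x x' hnb)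
            (fun v => Bx' (Prod.mk v ⁻¹' At)) (fun v => prob_le_one)
      _ = E_B * (E_T * (((Test x').prod Bx') At) + ENNReal.ofReal δ_Test)
          + ENNReal.ofReal δ_Base := by
          rw [Measure.prod_apply hAtmeas, lintegral_fintype]
  -- put the pieces together
  have hPx : PTR T Test Base x A = ((Test x).prod (Base x)) (F ⁻¹' A) := by
    rw [PTR, Measure.map_apply hF hA]
  have hPx' : PTR T Test Base x' A = ((Test x').prod (Base x')) (F ⁻¹' A) := by
    rw [PTR, Measure.map_apply hF hA]
  have hQside : ((Test x').prod Bx') At ≤ PTR T Test Base x' A := by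
    rw [hPx', ← hEq x']
    exact measure_mono Set.inter_subset_left
  have hsplit : PTR T Test Base x A
      ≤ ((Test x).prod Bx) At + (E_T * ENNReal.ofReal β_Test + ENNReal.ofReal δ_Test) := by
    rw [hPx, ← hEq x]
    calc ((Test x).prod (Base x)) (F ⁻¹' A)
        ≤ ((Test x).prod (Base x)) (F ⁻¹' A ∩ {p | p.1 ∉ K})
          + ((Test x).prod (Base x)) (F ⁻¹' A \ {p | p.1 ∉ K}) :=
          measure_le_inter_add_diff _ _ _
      _ ≤ ((Test x).prod (Base x)) (F ⁻¹' A ∩ {p | p.1 ∉ K})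
          + (E_T * ENNReal.ofReal β_Test + ENNReal.ofReal δ_Test) := by
          gcongr
          calc ((Test x).prod (Base x)) (F ⁻¹' A \ {p | p.1 ∉ K})
              ≤ ((Test x).prod (Base x)) (K ×ˢ Set.univ) := by
                refine measure_mono fun p hp => ?_
                exact ⟨not_not.mp hp.2, trivial⟩
            _ = Test x K := by rw [Measure.prod_prod, measure_univ, mul_one]
            _ ≤ _ := hKsmall
  -- final arithmetic
  have hexp : E_B * E_T = ENNReal.ofReal (Real.exp (ε_Base + ε_Test)) := by
    rw [Real.exp_add, ENNReal.ofReal_mul (Real.exp_nonneg _)]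
  calc PTR T Test Base x A
      ≤ ((Test x).prod Bx) At + (E_T * ENNReal.ofReal β_Test + ENNReal.ofReal δ_Test) :=
        hsplit
    _ ≤ (E_B * (E_T * (((Test x').prod Bx') At) + ENNReal.ofReal δ_Test)
          + ENNReal.ofReal δ_Base)
        + (E_T * ENNReal.ofReal β_Test + ENNReal.ofReal δ_Test) := by gcongr
    _ ≤ (E_B * (E_T * PTR T Test Base x' A + ENNReal.ofReal δ_Test)
          + ENNReal.ofReal δ_Base)
        + (E_T * ENNReal.ofReal β_Test + ENNReal.ofReal δ_Test) := by gcongr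
    _ = E_B * E_T * PTR T Test Base x' A
        + (E_B * ENNReal.ofReal δ_Test + ENNReal.ofReal δ_Base
            + (E_T * ENNReal.ofReal β_Test + ENNReal.ofReal δ_Test)) := by ring
    _ ≤ ENNReal.ofReal (Real.exp (ε_Base + ε_Test)) * PTR T Test Base x' A
        + ENNReal.ofReal (δ_Base + (1 + Real.exp (ε_Base + ε_Test)) * δ_Test
            + (1 + Real.exp ε_Test) * Real.exp (ε_Base + ε_Test) * β_Test) := by
        rw [hexp]
        gcongr
        have he1 : E_B * ENNReal.ofReal δ_Test = ENNReal.ofReal (Real.exp ε_Base * δ_Test) := by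
          rw [ENNReal.ofReal_mul (Real.exp_nonneg _)]
        have he2 : E_T * ENNReal.ofReal β_Test = ENNReal.ofReal (Real.exp ε_Test * β_Test) := by
          rw [ENNReal.ofReal_mul (Real.exp_nonneg _)]
        rw [he1, he2, ← ENNReal.ofReal_add (by positivity) hδB,
          ← ENNReal.ofReal_add (by positivity) hδT,
          ← ENNReal.ofReal_add (by positivity) (by positivity)]
        refine ENNReal.ofReal_le_ofReal ?_
        have hm1 : Real.exp ε_Base ≤ Real.exp (ε_Base + ε_Test) :=
          Real.exp_le_exp.mpr (by linarith)
        have hm2 : Real.exp ε_Test ≤ Real.exp (ε_Base + ε_Test) :=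
          Real.exp_le_exp.mpr (by linarith)
        have hm3 : (1 : ℝ) ≤ Real.exp ε_Test := Real.one_le_exp hεT
        have hm4 : (0 : ℝ) < Real.exp (ε_Base + ε_Test) := Real.exp_pos _
        nlinarith [mul_le_mul_of_nonneg_right hm1 hδT, mul_le_mul_of_nonneg_right hm2 hβ,
          mul_nonneg (Real.exp_nonneg (ε_Base + ε_Test)) hβ,
          mul_nonneg (mul_nonneg (Real.exp_nonneg ε_Test) (le_of_lt hm4)) hβ]



/-- privacy of Propose-Test-Release under continual observation.
If `Base` is `(ε_Base, δ_Base)`-indistinguishable on all prefixes (of neighboring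
streams) consistent with `Z`, `Test` is `(ε_Test, δ_Test)`-indistинguishable everywhere,
and `Test` outputs `⊥` with probability at least `1 − β_Test` by the first time the
input leaves `Z`, then `PTR` is `(ε, δ)`-indistinguishable on all neighboring streams,
with `ε = ε_Base + ε_Test` and
`δ = δ_Base + (1 + e^{ε_Base+ε_Test}) δ_Test + (1 + e^{ε_Test}) e^{ε_Base+ε_Test} β_Test`. -/
theorem ptr_privacy_continual_observation
    {X Y : Type*} [MeasurableSpace Y] (T : ℕ)
    (Neighbor : (Fin T → X) → (Fin T → X) → Prop)
    (hsymm : ∀ x x', Neighbor x x' → Neighbor x' x)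
    (Z : Set (Fin T → X))
    (Test : (Fin T → X) → Measure (Fin T → Bool))
    (Base : (Fin T → X) → Measure (Fin T → Y))
    (hTestProb : ∀ x, IsProbabilityMeasure (Test x))
    (hBaseProb : ∀ x, IsProbabilityMeasure (Base x))
    -- `Test` is a streaming algorithm: prefixes of its output distribution depend only
    -- on the corresponding prefixes of the input.
    (hTestStream : ∀ (t : ℕ) (x x' : Fin T → X),
      (∀ s : Fin T, (s : ℕ) < t → x s = x' s) →
      Measure.map (prefixMask T t) (Test x) = Measure.map (prefixMask T t) (Test x'))
    -- `Base` is a streaming algorithm.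
    (hBaseStream : ∀ (t : ℕ) (x x' : Fin T → X),
      (∀ s : Fin T, (s : ℕ) < t → x s = x' s) →
      Measure.map (prefixMask T t) (Base x) = Measure.map (prefixMask T t) (Base x'))
    (ε_Base δ_Base ε_Test δ_Test β_Test : ℝ)
    (hεB : 0 ≤ ε_Base) (hδB : 0 ≤ δ_Base) (hεT : 0 ≤ ε_Test) (hδT : 0 ≤ δ_Test)
    (hβ : 0 ≤ β_Test)
    -- (i) indistinguishability of `Base` on prefixes consistent with `Z`
    (hBase : ∀ t : ℕ, 1 ≤ t → t ≤ T → ∀ x x' : Fin T → X, Neighbor x x' →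
      PrefixInZ T Z t x → PrefixInZ T Z t x' →
      Indist ε_Base δ_Base
        (Measure.map (prefixMask T t) (Base x)) (Measure.map (prefixMask T t) (Base x')))
    -- (ii) `Test` is `(ε_Test, δ_Test)`-DP under continual observation
    (hTest : ∀ x x' : Fin T → X, Neighbor x x' → Indist ε_Test δ_Test (Test x) (Test x'))
    -- (iii) soundness of `Test`: if the prefix of `x` through time `t` leaves `Z`, then
    -- `Test` outputs `⊥` at or before time `t` with probability at least `1 − β_Test`
    (hSound : ∀ (x : Fin T → X) (t : ℕ), 1 ≤ t → t ≤ T → ¬ PrefixInZ T Z t x →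
      ENNReal.ofReal (1 - β_Test)
        ≤ Test x {v | ∃ s : Fin T, (s : ℕ) < t ∧ v s = false}) :
    ∀ x x' : Fin T → X, Neighbor x x' →
      Indist (ε_Base + ε_Test)
        (δ_Base + (1 + Real.exp (ε_Base + ε_Test)) * δ_Test
          + (1 + Real.exp ε_Test) * Real.exp (ε_Base + ε_Test) * β_Test)
        (PTR T Test Base x) (PTR T Test Base x') := by
  intro x x' hnb
  intro A hA
  constructor
  · exact one_sided T Neighbor Z Test Base hTestProb hBaseProb ε_Base δ_Base ε_Test δ_Test
      β_Test hεB hδB hεT hδT hβ hBase hTest hSound x x' hnb A hA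
  · exact one_sided T Neighbor Z Test Base hTestProb hBaseProb ε_Base δ_Base ε_Test δ_Test
      β_Test hεB hδB hεT hδT hβ hBase hTest hSound x' x (hsymm x x' hnb) A hA
end

section
/- Let ε > 0, c ∈ ℕ with c ≥ 1, and τ ∈ ℝ. Let Z and Z' be independent real random variables, where Z has the Laplace distribution with scale 2/ε (density (ε/4)·e^{−ε|z|/2} with respect to Lebesgue measure) and Z' has the Laplace distribution with scale 4c/ε (density (ε/(8c))·e^{−ε|z|/(4c)}). Then for every x ∈ ℝ and q ∈ ℝ: (1) if x ≥ 0 and q ≥ x + τ, then P(q + Z' ≤ τ + Z) ≤ exp(−|x|·ε/(8c)); and (2) if x ≤ 0 and q ≤ x + τ, then P(q + Z' ≥ τ + Z) ≤ exp(−|x|·ε/(8c)). -/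
open MeasureTheory Real Set

/-- The Laplace distribution with scale `b`: the measure on `ℝ` with density
`(1/(2b))·e^{−|z|/b}` with respect to Lebesgue measure. -/
noncomputable def laplace (b : ℝ) : Measure ℝ :=
  (volume : Measure ℝ).withDensity
    (fun z => ENNReal.ofReal ((1 / (2 * b)) * Real.exp (-|z| / b)))

instance (b : ℝ) : SigmaFinite (laplace b) := by
  unfold laplace
  infer_instance

lemma laplace_Ici (b u : ℝ) (hb : 0 < b) (hu : 0 ≤ u) :
    laplace b (Set.Ici u) = ENNReal.ofReal ((1/2) * Real.exp (-u/b)) := by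
  rw [laplace, withDensity_apply _ measurableSet_Ici,
    ← MeasureTheory.restrict_Ioi_eq_restrict_Ici]
  have hcong : ∀ᵐ z ∂(volume.restrict (Ioi u)),
      ENNReal.ofReal ((1 / (2 * b)) * Real.exp (-|z| / b))
        = ENNReal.ofReal ((1 / (2 * b)) * Real.exp (-z / b)) := by
    filter_upwards [ae_restrict_mem measurableSet_Ioi] with z hz
    rw [abs_of_pos (lt_of_le_of_lt hu hz)]
  rw [lintegral_congr_ae hcong]
  have hint : IntegrableOn (fun z => (1 / (2*b)) * Real.exp (-z / b)) (Ioi u) := by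
    apply Integrable.const_mul
    have := exp_neg_integrableOn_Ioi u (by positivity : (0:ℝ) < b⁻¹)
    simpa [neg_div, div_eq_inv_mul, IntegrableOn] using this
  rw [← ofReal_integral_eq_lintegral_ofReal hint
    (Filter.Eventually.of_forall fun z => by positivity)]
  congr 1
  rw [MeasureTheory.integral_const_mul]
  have h : ∀ z : ℝ, Real.exp (-z/b) = (fun x => Real.exp (-x)) (b⁻¹ * z) := by
    intro z; simp [neg_div, div_eq_inv_mul]
  simp_rw [h]
  rw [integral_comp_mul_left_Ioi (fun x => Real.exp (-x)) u (by positivity : (0:ℝ) < b⁻¹),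
    integral_exp_neg_Ioi]
  field_simp
  ring_nf


lemma laplace_Iic (b u : ℝ) : laplace b (Set.Iic (-u)) = laplace b (Set.Ici u) := by
  rw [laplace, withDensity_apply _ measurableSet_Iic, withDensity_apply _ measurableSet_Ici]
  rw [← lintegral_indicator measurableSet_Iic, ← lintegral_indicator measurableSet_Ici]
  have hmp : MeasurePreserving (fun z : ℝ => -z) volume volume :=
    Measure.measurePreserving_neg volume
  rw [← hmp.lintegral_comp]
  · apply lintegral_congr fun z => ?_
    by_cases h : z ∈ Ici u
    · rw [Set.indicator_of_mem h, Set.indicator_of_mem (by simpa using h), abs_neg]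
    · rw [Set.indicator_of_notMem h, Set.indicator_of_notMem (by simpa using h)]
  · exact (Measurable.indicator (by measurability) measurableSet_Iic)

lemma laplace_univ_le (b : ℝ) (hb : 0 < b) : laplace b Set.univ ≤ 1 := by
  have h : (Set.univ : Set ℝ) ⊆ Set.Iic (-(0:ℝ)) ∪ Set.Ici (0:ℝ) := by
    intro z _; rcases le_total z 0 with h | h
    · exact Or.inl (by simpa using h)
    · exact Or.inr h
  calc laplace b Set.univ ≤ laplace b (Set.Iic (-(0:ℝ))) + laplace b (Set.Ici (0:ℝ)) :=
        (measure_mono h).trans (measure_union_le _ _)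
    _ = ENNReal.ofReal ((1/2) * Real.exp (-0/b)) + ENNReal.ofReal ((1/2) * Real.exp (-0/b)) := by
        rw [laplace_Iic, laplace_Ici b 0 hb le_rfl]
    _ ≤ 1 := by
        rw [← ENNReal.ofReal_add (by positivity) (by positivity)]
        norm_num

/-- tails of a difference of Laplace random variables.
Let `Z ~ Laplace(2/ε)` and `Z' ~ Laplace(4c/ε)` be independent (modelled by the product
measure, with first coordinate `Z` and second coordinate `Z'`).  Then for all
`x, q ∈ ℝ`:
(1) if `x ≥ 0` and `q ≥ x + τ`, then `P(q + Z' ≤ τ + Z) ≤ exp(−|x|ε/(8c))`; and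
(2) if `x ≤ 0` and `q ≤ x + τ`, then `P(q + Z' ≥ τ + Z) ≤ exp(−|x|ε/(8c))`. -/
theorem laplace_sum_tails (ε : ℝ) (hε : 0 < ε) (c : ℕ) (hc : 1 ≤ c) (τ x q : ℝ) :
    (0 ≤ x → x + τ ≤ q →
      ((laplace (2 / ε)).prod (laplace (4 * c / ε))) {p : ℝ × ℝ | q + p.2 ≤ τ + p.1}
        ≤ ENNReal.ofReal (Real.exp (-(|x| * ε) / (8 * c)))) ∧
    (x ≤ 0 → q ≤ x + τ →
      ((laplace (2 / ε)).prod (laplace (4 * c / ε))) {p : ℝ × ℝ | τ + p.1 ≤ q + p.2}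
        ≤ ENNReal.ofReal (Real.exp (-(|x| * ε) / (8 * c)))) := by
  have hcR : (0:ℝ) < c := by exact_mod_cast hc
  have hb1 : (0:ℝ) < 2 / ε := by positivity
  have hb2 : (0:ℝ) < 4 * c / ε := by positivity
  have hcne : (c:ℝ) ≠ 0 := ne_of_gt hcR
  have hεne : ε ≠ 0 := ne_of_gt hε
  have e1 : -(x/2) / (2/ε) = -(x*ε)/4 := by rw [div_div_eq_mul_div]; ring
  have e2 : -(x/2) / (4*c/ε) = -(x*ε)/(8*c) := by rw [div_div_eq_mul_div]; field_simp; ring_nf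
  constructor
  · intro hx hq
    have hsub : {p : ℝ × ℝ | q + p.2 ≤ τ + p.1}
        ⊆ (Set.Ici (x/2) ×ˢ Set.univ) ∪ (Set.univ ×ˢ Set.Iic (-(x/2))) := by
      rintro ⟨z, z'⟩ hp
      simp only [Set.mem_setOf_eq] at hp
      by_contra h
      simp only [Set.mem_union, Set.mem_prod, Set.mem_Ici, Set.mem_Iic, Set.mem_univ,
        and_true, true_and, not_or, not_le] at h
      linarith [h.1, h.2]
    have key : ((laplace (2 / ε)).prod (laplace (4 * c / ε))) {p : ℝ × ℝ | q + p.2 ≤ τ + p.1}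
        ≤ laplace (2/ε) (Set.Ici (x/2)) * laplace (4*c/ε) Set.univ
          + laplace (2/ε) Set.univ * laplace (4*c/ε) (Set.Iic (-(x/2))) := by
      refine (measure_mono hsub).trans ((measure_union_le _ _).trans ?_)
      rw [Measure.prod_prod, Measure.prod_prod]
    refine key.trans ?_
    have t1 : laplace (2/ε) (Set.Ici (x/2)) = ENNReal.ofReal ((1/2) * Real.exp (-(x*ε)/4)) := by
      rw [laplace_Ici _ _ hb1 (by linarith), ← e1]
    have t2 : laplace (4*c/ε) (Set.Iic (-(x/2)))
        = ENNReal.ofReal ((1/2) * Real.exp (-(x*ε)/(8*c))) := by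
      rw [laplace_Iic, laplace_Ici _ _ hb2 (by linarith), ← e2]
    calc laplace (2/ε) (Set.Ici (x/2)) * laplace (4*c/ε) Set.univ
          + laplace (2/ε) Set.univ * laplace (4*c/ε) (Set.Iic (-(x/2)))
        ≤ laplace (2/ε) (Set.Ici (x/2)) * 1 + 1 * laplace (4*c/ε) (Set.Iic (-(x/2))) := by
          gcongr
          · exact laplace_univ_le _ hb2
          · exact laplace_univ_le _ hb1
      _ = ENNReal.ofReal ((1/2) * Real.exp (-(x*ε)/4))
            + ENNReal.ofReal ((1/2) * Real.exp (-(x*ε)/(8*c))) := by rw [t1, t2]; ring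
      _ ≤ ENNReal.ofReal (Real.exp (-(|x| * ε) / (8 * c))) := by
          rw [← ENNReal.ofReal_add (by positivity) (by positivity)]
          apply ENNReal.ofReal_le_ofReal
          rw [abs_of_nonneg hx]
          have hle : -(x*ε)/4 ≤ -(x*ε)/(8*c) := by
            rw [div_le_div_iff₀ (by norm_num) (by positivity)]
            have key : 0 ≤ (x*ε)*(8*c-4) :=
              mul_nonneg (mul_nonneg hx hε.le) (by push_cast; nlinarith [hcR, (by exact_mod_cast hc : (1:ℝ) ≤ c)])
            nlinarith [key]
          have := Real.exp_le_exp.mpr hle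
          linarith
  · intro hx hq
    have hsub : {p : ℝ × ℝ | τ + p.1 ≤ q + p.2}
        ⊆ (Set.Iic (x/2) ×ˢ Set.univ) ∪ (Set.univ ×ˢ Set.Ici (-(x/2))) := by
      rintro ⟨z, z'⟩ hp
      simp only [Set.mem_setOf_eq] at hp
      by_contra h
      simp only [Set.mem_union, Set.mem_prod, Set.mem_Ici, Set.mem_Iic, Set.mem_univ,
        and_true, true_and, not_or, not_le] at h
      linarith [h.1, h.2]
    have key : ((laplace (2 / ε)).prod (laplace (4 * c / ε))) {p : ℝ × ℝ | τ + p.1 ≤ q + p.2}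
        ≤ laplace (2/ε) (Set.Iic (x/2)) * laplace (4*c/ε) Set.univ
          + laplace (2/ε) Set.univ * laplace (4*c/ε) (Set.Ici (-(x/2))) := by
      refine (measure_mono hsub).trans ((measure_union_le _ _).trans ?_)
      rw [Measure.prod_prod, Measure.prod_prod]
    refine key.trans ?_
    have t1 : laplace (2/ε) (Set.Iic (x/2)) = ENNReal.ofReal ((1/2) * Real.exp ((x*ε)/4)) := by
      rw [show (x/2 : ℝ) = -(-(x/2)) by ring, laplace_Iic,
        laplace_Ici _ _ hb1 (by linarith)]
      have : -(-(x/2)) / (2/ε) = (x*ε)/4 := by rw [div_div_eq_mul_div]; ring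
      rw [this]
    have t2 : laplace (4*c/ε) (Set.Ici (-(x/2)))
        = ENNReal.ofReal ((1/2) * Real.exp ((x*ε)/(8*c))) := by
      rw [laplace_Ici _ _ hb2 (by linarith)]
      have : -(-(x/2)) / (4*c/ε) = (x*ε)/(8*c) := by rw [div_div_eq_mul_div]; field_simp; ring_nf
      rw [this]
    calc laplace (2/ε) (Set.Iic (x/2)) * laplace (4*c/ε) Set.univ
          + laplace (2/ε) Set.univ * laplace (4*c/ε) (Set.Ici (-(x/2)))
        ≤ laplace (2/ε) (Set.Iic (x/2)) * 1 + 1 * laplace (4*c/ε) (Set.Ici (-(x/2))) := by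
          gcongr
          · exact laplace_univ_le _ hb2
          · exact laplace_univ_le _ hb1
      _ = ENNReal.ofReal ((1/2) * Real.exp ((x*ε)/4))
            + ENNReal.ofReal ((1/2) * Real.exp ((x*ε)/(8*c))) := by rw [t1, t2]; ring
      _ ≤ ENNReal.ofReal (Real.exp (-(|x| * ε) / (8 * c))) := by
          rw [← ENNReal.ofReal_add (by positivity) (by positivity)]
          apply ENNReal.ofReal_le_ofReal
          rw [abs_of_nonpos hx]
          have hgoal : -(-x * ε) / (8*c) = (x*ε)/(8*c) := by ring
          rw [hgoal]
          have hle : (x*ε)/4 ≤ (x*ε)/(8*c) := by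
            rw [div_le_div_iff₀ (by norm_num) (by positivity)]
            have key : (x*ε)*(8*c-4) ≤ 0 :=
              mul_nonpos_of_nonpos_of_nonneg (mul_nonpos_of_nonpos_of_nonneg hx hε.le)
                (by nlinarith [(by exact_mod_cast hc : (1:ℝ) ≤ c)])
            nlinarith [key]
          have := Real.exp_le_exp.mpr hle
          linarith
end

section
/- (Incremental edge-sensitivity of connected component counts.) Let f_CC(S)_t denote the number of connected components of flat(S_[t]) (isolated nodes count as components). For every T ∈ ℕ and every pair of edge-neighboring insertion-only graph streams S, S' of length T, the ℓ1 distance between the increment sequences satisfies Σ_{t=1}^{T} |inc_{f_CC}(S)_t − inc_{f_CC}(S')_t| ≤ 2. -/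
open Finset

/-- A finite graph: a finite vertex set together with a finite set of undirected edges. -/
structure FinGraph where
  verts : Finset ℕ
  edges : Finset (Sym2 ℕ)

namespace FinGraph

/-- A finite graph is valid if every edge is a non-loop both of whose endpoints are vertices. -/
def Valid (G : FinGraph) : Prop :=
  ∀ e ∈ G.edges, ¬ e.IsDiag ∧ ∀ v ∈ e, v ∈ G.verts

/-- The degree of a vertex: the number of edges containing it. -/
def degree (G : FinGraph) (v : ℕ) : ℕ :=
  (G.edges.filter (fun e => v ∈ e)).card

/-- Remove a node and all of its adjacent edges. -/
def removeNode (G : FinGraph) (v : ℕ) : FinGraph :=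
  ⟨G.verts.erase v, G.edges.filter (fun e => v ∉ e)⟩

/-- Remove a single edge. -/
def removeEdge (G : FinGraph) (e : Sym2 ℕ) : FinGraph :=
  ⟨G.verts, G.edges.erase e⟩

/-- `G` is `(D, ℓ)`-bounded: it has at most `ℓ` nodes of degree greater than `D`. -/
def DLBounded (G : FinGraph) (D ℓ : ℕ) : Prop :=
  (G.verts.filter (fun v => D < G.degree v)).card ≤ ℓ

end FinGraph

/-- One graph is obtained from the other by removing one node and all of its adjacent edges. -/
def nodeNeighborGraph (G G' : FinGraph) : Prop :=
  (∃ v ∈ G.verts, G' = G.removeNode v) ∨ (∃ v ∈ G'.verts, G = G'.removeNode v)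

/-- `G'` is obtained from `G` by removing a single edge, an isolated node,
or a degree-one node together with its adjacent edge. -/
def edgeRemovalGraph (G G' : FinGraph) : Prop :=
  (∃ e ∈ G.edges, G' = G.removeEdge e) ∨
  (∃ v ∈ G.verts, G.degree v = 0 ∧ G' = FinGraph.mk (G.verts.erase v) G.edges) ∨
  (∃ v ∈ G.verts, G.degree v = 1 ∧ G' = G.removeNode v)

/-- Edge-neighboring graphs. -/
def edgeNeighborGraph (G G' : FinGraph) : Prop :=
  edgeRemovalGraph G G' ∨ edgeRemovalGraph G' G

/-- The length of a shortest chain of valid graphs from `A` to `B` in which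
consecutive graphs are related by `R`. -/
noncomputable def graphChainDist (R : FinGraph → FinGraph → Prop) (A B : FinGraph) : ℕ :=
  sInf {n | ∃ f : ℕ → FinGraph, f 0 = A ∧ f n = B ∧ (∀ i ≤ n, (f i).Valid) ∧
    ∀ i < n, R (f i) (f (i + 1))}

/-- Node distance between finite graphs. -/
noncomputable def graphNodeDist : FinGraph → FinGraph → ℕ := graphChainDist nodeNeighborGraph

/-- Edge distance between finite graphs. -/
noncomputable def graphEdgeDist : FinGraph → FinGraph → ℕ := graphChainDist edgeNeighborGraph

/-- An insertion-only graph stream: the nodes and edges arriving at each time step. -/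
structure GraphStream where
  nodes : ℕ → Finset ℕ
  edges : ℕ → Finset (Sym2 ℕ)

namespace GraphStream

/-- Validity of a graph stream of length `T`: arrivals happen only at times `1, …, T`,
no node or edge arrives twice, and every edge is a non-loop whose endpoints
arrive at or before the edge does. -/
def Valid (T : ℕ) (S : GraphStream) : Prop :=
  (∀ t, ((S.nodes t).Nonempty ∨ (S.edges t).Nonempty) → 1 ≤ t ∧ t ≤ T) ∧
  (∀ s t, s ≠ t → Disjoint (S.nodes s) (S.nodes t)) ∧
  (∀ s t, s ≠ t → Disjoint (S.edges s) (S.edges t)) ∧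
  (∀ t, ∀ e ∈ S.edges t, ¬ e.IsDiag ∧ ∀ v ∈ e, ∃ s ≤ t, v ∈ S.nodes s)

/-- The flattened graph of the stream through time `t`. -/
def flat (S : GraphStream) (t : ℕ) : FinGraph :=
  ⟨(Finset.range (t + 1)).biUnion S.nodes, (Finset.range (t + 1)).biUnion S.edges⟩

/-- Remove a node and all of its adjacent edges from a stream. -/
def removeNode (S : GraphStream) (v : ℕ) : GraphStream :=
  ⟨fun t => (S.nodes t).erase v, fun t => (S.edges t).filter (fun e => v ∉ e)⟩

/-- Remove a single edge from a stream. -/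
def removeEdge (S : GraphStream) (e : Sym2 ℕ) : GraphStream :=
  ⟨S.nodes, fun t => (S.edges t).erase e⟩

/-- Truncation of a stream: keep only arrivals at times `≤ t`. -/
def trunc (S : GraphStream) (t : ℕ) : GraphStream :=
  ⟨fun s => if s ≤ t then S.nodes s else ∅, fun s => if s ≤ t then S.edges s else ∅⟩

/-- `v` arrives at some point in the stream. -/
def hasNode (S : GraphStream) (v : ℕ) : Prop :=
  ∃ t, v ∈ S.nodes t

/-- The stream is `(D, ℓ)`-bounded through time `t`. -/
def DLBoundedThrough (S : GraphStream) (D ℓ t : ℕ) : Prop :=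
  (S.flat t).DLBounded D ℓ

end GraphStream

/-- `S'` is obtained from `S` by removing one node and all of its adjacent edges
(which may arrive at many time steps). -/
def nodeRemovalStream (S S' : GraphStream) : Prop :=
  ∃ v, S.hasNode v ∧ S' = S.removeNode v

/-- Node-neighboring streams. -/
def nodeNeighborStream (S S' : GraphStream) : Prop :=
  nodeRemovalStream S S' ∨ nodeRemovalStream S' S

/-- `S'` is obtained from the length-`T` stream `S` by removing a single edge,
an isolated node, or a degree-one node together with its adjacent edge. -/
def edgeRemovalStream (T : ℕ) (S S' : GraphStream) : Prop :=
  (∃ t, ∃ e ∈ S.edges t, S' = S.removeEdge e) ∨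
  (∃ v, S.hasNode v ∧ (S.flat T).degree v ≤ 1 ∧ S' = S.removeNode v)

/-- Edge-neighboring streams (of length `T`). -/
def edgeNeighborStream (T : ℕ) (S S' : GraphStream) : Prop :=
  edgeRemovalStream T S S' ∨ edgeRemovalStream T S' S

/-- Length of a shortest chain of valid streams of length `T` in which consecutive
streams are related by `R`. -/
noncomputable def streamChainDist (T : ℕ) (R : GraphStream → GraphStream → Prop)
    (A B : GraphStream) : ℕ :=
  sInf {n | ∃ f : ℕ → GraphStream, f 0 = A ∧ f n = B ∧ (∀ i ≤ n, (f i).Valid T) ∧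
    ∀ i < n, R (f i) (f (i + 1))}

/-- Node distance between streams of length `T`. -/
noncomputable def streamNodeDist (T : ℕ) : GraphStream → GraphStream → ℕ :=
  streamChainDist T nodeNeighborStream

/-- Edge distance between streams of length `T`. -/
noncomputable def streamEdgeDist (T : ℕ) : GraphStream → GraphStream → ℕ :=
  streamChainDist T (edgeNeighborStream T)

/-- A fixed injective key on undirected edges, providing the consistent total order in
which edges arriving at the same time step are processed. -/
def edgeKey : Sym2 ℕ → ℕ :=
  Sym2.lift ⟨fun a b => Nat.pair (min a b) (max a b), fun a b => by
    dsimp only; rw [inf_comm, sup_comm]⟩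

/-- The two endpoints of an edge, as an ordered pair. -/
def endpointsOf (e : Sym2 ℕ) : ℕ × ℕ := (edgeKey e).unpair

/-- The edges of a finite edge set, listed in increasing `edgeKey` order. -/
def sortEdges (E : Finset (Sym2 ℕ)) : List (Sym2 ℕ) :=
  ((E.image edgeKey).sort (· ≤ ·)).map fun k => s(k.unpair.1, k.unpair.2)

/-- All edges of a stream of length `T`, tagged with their arrival times, in processing
order: lexicographically by (arrival time, consistent edge order). -/
def GraphStream.procList (S : GraphStream) (T : ℕ) : List (ℕ × Sym2 ℕ) :=
  (List.range (T + 1)).flatMap fun t => (sortEdges (S.edges t)).map fun e => (t, e)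

/-- One step of the greedy projection with degree bound `D`.  The state consists of the
degree counters together with the edges kept so far (indexed by arrival time).
If `bbds = true` the counters of the endpoints are incremented for every processed edge
(the BBDS rule); if `bbds = false` they are incremented only when the edge is kept
(the DLL rule). -/
def projStep (D : ℕ) (bbds : Bool) (st : (ℕ → ℕ) × (ℕ → Finset (Sym2 ℕ)))
    (p : ℕ × Sym2 ℕ) : (ℕ → ℕ) × (ℕ → Finset (Sym2 ℕ)) :=
  let d := st.1
  let u := (endpointsOf p.2).1
  let v := (endpointsOf p.2).2
  let keep : Bool := decide (d u < D ∧ d v < D)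
  ((if bbds || keep then fun w => if w = u ∨ w = v then d w + 1 else d w else d),
   (if keep then fun s => if s = p.1 then insert p.2 (st.2 s) else st.2 s else st.2))

/-- The time-aware projection with degree bound `D` on streams of length `T`:
the BBDS projection if `bbds = true` and the DLL projection if `bbds = false`.
All arriving nodes are kept; an arriving edge is kept (at its arrival time) iff both of
its endpoints have counter value `< D` when the edge is processed. -/
def project (bbds : Bool) (D T : ℕ) (S : GraphStream) : GraphStream :=
  ⟨S.nodes,
   ((S.procList T).foldl (projStep D bbds)
      ((fun _ => 0 : ℕ → ℕ), (fun _ => ∅ : ℕ → Finset (Sym2 ℕ)))).2⟩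

/-- The BBDS projection `Π^BBDS_D` on streams of length `T`. -/
def projBBDS (D T : ℕ) : GraphStream → GraphStream := project true D T

/-- The DLL projection `Π^DLL_D` on streams of length `T`. -/
def projDLL (D T : ℕ) : GraphStream → GraphStream := project false D T

/-- The simple graph on `ℕ` determined by the edge set of a finite graph. -/
def FinGraph.toSimpleGraph (G : FinGraph) : SimpleGraph ℕ where
  Adj u v := u ≠ v ∧ s(u, v) ∈ G.edges
  symm := by
    refine ⟨?_⟩
    intro u v h
    exact ⟨h.1.symm, by rw [Sym2.eq_swap]; exact h.2⟩
  loopless := ⟨fun u h => h.1 rfl⟩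

open Classical in
/-- The number of connected components of a finite graph (isolated nodes count as
components): the number of distinct reachability classes among the vertices. -/
noncomputable def FinGraph.ccCount (G : FinGraph) : ℕ :=
  (G.verts.image fun v => G.verts.filter fun w => G.toSimpleGraph.Reachable v w).card

section CCAux

open Finset

open Classical in
/-- The connected component of `v` as a finset of vertices. -/
noncomputable def FinGraph.comp (G : FinGraph) (v : ℕ) : Finset ℕ :=
  G.verts.filter fun w => G.toSimpleGraph.Reachable v w

lemma FinGraph.ccCount_eq_comp (G : FinGraph) :
    G.ccCount = (G.verts.image G.comp).card := rfl

lemma FinGraph.mem_comp {G : FinGraph} {v w : ℕ} :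
    w ∈ G.comp v ↔ w ∈ G.verts ∧ G.toSimpleGraph.Reachable v w := by
  classical
  simp [FinGraph.comp]

lemma FinGraph.comp_eq_of_reach {G : FinGraph} {v w : ℕ}
    (h : G.toSimpleGraph.Reachable v w) : G.comp v = G.comp w := by
  classical
  unfold FinGraph.comp
  exact Finset.filter_congr fun x _ => ⟨fun hx => h.symm.trans hx, fun hx => h.trans hx⟩

lemma reach_mono {G H : FinGraph} (h : G.edges ⊆ H.edges) {x y : ℕ}
    (hr : G.toSimpleGraph.Reachable x y) : H.toSimpleGraph.Reachable x y := by
  refine SimpleGraph.Reachable.mono ?_ hr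
  intro a b hab
  exact ⟨hab.1, h hab.2⟩

lemma ccCount_isolated (G : FinGraph) (v : ℕ) (hv : v ∈ G.verts)
    (hiso : ∀ e ∈ G.edges, v ∉ e) :
    G.ccCount = (FinGraph.mk (G.verts.erase v) G.edges).ccCount + 1 := by
  classical
  set G2 : FinGraph := FinGraph.mk (G.verts.erase v) G.edges with hG2
  have hsg : G2.toSimpleGraph = G.toSimpleGraph := rfl
  have hreach : ∀ x, G.toSimpleGraph.Reachable v x → v = x := by
    intro x h
    rw [SimpleGraph.reachable_iff_reflTransGen] at h
    induction h with
    | refl => rfl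
    | tail _ hadj ih =>
      rw [← ih] at hadj
      exact absurd (Sym2.mem_mk_left _ _) (hiso _ hadj.2)
  have hcompv : G.comp v = {v} := by
    ext x
    simp only [FinGraph.mem_comp, Finset.mem_singleton]
    constructor
    · rintro ⟨-, hr⟩; exact (hreach x hr).symm
    · rintro rfl; exact ⟨hv, SimpleGraph.Reachable.refl _⟩
  have hcomp2 : ∀ w ∈ G.verts.erase v, G2.comp w = G.comp w := by
    intro w hw
    have hwv : w ≠ v := (Finset.mem_erase.mp hw).1
    have h1 : G2.comp w = (G.comp w).erase v := by
      unfold FinGraph.comp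
      rw [hsg]
      exact Finset.filter_erase _ v G.verts
    rw [h1, Finset.erase_eq_of_notMem]
    intro hmem
    exact hwv (hreach w (FinGraph.mem_comp.mp hmem).2.symm).symm
  have hv_notmem : G.comp v ∉ (G.verts.erase v).image G.comp := by
    rw [hcompv]
    intro hx
    obtain ⟨w, hw, hww⟩ := Finset.mem_image.mp hx
    have hvm : v ∈ G.comp w := by rw [hww]; exact Finset.mem_singleton_self v
    exact (Finset.mem_erase.mp hw).1 (hreach w (FinGraph.mem_comp.mp hvm).2.symm).symm
  have himg : (G.verts.erase v).image G2.comp = (G.verts.erase v).image G.comp :=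
    Finset.image_congr fun x hx => hcomp2 x hx
  rw [FinGraph.ccCount_eq_comp, FinGraph.ccCount_eq_comp]
  show _ = ((G.verts.erase v).image G2.comp).card + 1
  rw [himg]
  conv_lhs => rw [← Finset.insert_erase hv]
  rw [Finset.image_insert, Finset.card_insert_of_notMem hv_notmem]

lemma reach_removeNode (G : FinGraph) (u v : ℕ)
    (hdeg : ∀ e ∈ G.edges, v ∈ e → e = s(v, u)) {x y : ℕ} (hx : x ≠ v)
    (h : G.toSimpleGraph.Reachable x y) :
    (G.removeNode v).toSimpleGraph.Reachable x (if y = v then u else y) := by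
  rw [SimpleGraph.reachable_iff_reflTransGen] at h
  induction h with
  | refl => rw [if_neg hx]
  | @tail b c hxb hbc ih =>
    by_cases hb : b = v
    · by_cases hc : c = v
      · exact absurd (hb.trans hc.symm) hbc.ne
      · have hmem : s(v, c) ∈ G.edges := by rw [← hb]; exact hbc.2
        have heq : s(v, c) = s(v, u) := hdeg _ hmem (Sym2.mem_mk_left v c)
        have hcu : c = u := by
          rw [Sym2.eq_iff] at heq
          rcases heq with ⟨-, h2⟩ | ⟨h1, h2⟩
          · exact h2
          · exact absurd h2 hc
        rw [if_neg hc, hcu]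
        rw [if_pos hb] at ih
        exact ih
    · by_cases hc : c = v
      · have hmem : s(b, v) ∈ G.edges := by rw [← hc]; exact hbc.2
        have heq : s(b, v) = s(v, u) := hdeg _ hmem (Sym2.mem_mk_right b v)
        have hbu : b = u := by
          rw [Sym2.eq_iff] at heq
          rcases heq with ⟨h1, -⟩ | ⟨h1, -⟩
          · exact absurd h1 hb
          · exact h1
        rw [if_pos hc]
        rw [if_neg hb, hbu] at ih
        exact ih
      · have hadj : (G.removeNode v).toSimpleGraph.Adj b c := by
          refine ⟨hbc.1, ?_⟩
          simp only [FinGraph.removeNode, Finset.mem_filter]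
          refine ⟨hbc.2, fun hvm => ?_⟩
          rcases Sym2.mem_iff.mp hvm with h | h
          · exact hb h.symm
          · exact hc h.symm
        rw [if_neg hc]
        rw [if_neg hb] at ih
        exact ih.trans hadj.reachable

lemma ccCount_removeNode_degOne (G : FinGraph) (u v : ℕ) (hv : v ∈ G.verts)
    (hu : u ∈ G.verts) (hne : u ≠ v)
    (hdeg : ∀ e ∈ G.edges, v ∈ e → e = s(v, u)) (he : s(v, u) ∈ G.edges) :
    (G.removeNode v).ccCount = G.ccCount := by
  classical
  have hsub : (G.removeNode v).edges ⊆ G.edges := Finset.filter_subset _ _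
  have hadjvu : G.toSimpleGraph.Adj v u := ⟨fun h => hne h.symm, he⟩
  have hiff : ∀ x y, x ≠ v → y ≠ v →
      (G.toSimpleGraph.Reachable x y ↔ (G.removeNode v).toSimpleGraph.Reachable x y) := by
    intro x y hx hy
    constructor
    · intro h
      have := reach_removeNode G u v hdeg hx h
      rwa [if_neg hy] at this
    · exact reach_mono hsub
  have hGv : (G.removeNode v).verts = G.verts.erase v := rfl
  have hcomp : ∀ x ∈ G.verts.erase v, (G.removeNode v).comp x = (G.comp x).erase v := by
    intro x hx
    have hxv := (Finset.mem_erase.mp hx).1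
    ext y
    simp only [FinGraph.mem_comp, Finset.mem_erase, hGv]
    constructor
    · rintro ⟨⟨hyv, hym⟩, hr⟩
      exact ⟨hyv, hym, reach_mono hsub hr⟩
    · rintro ⟨hyv, hym, hr⟩
      exact ⟨⟨hyv, hym⟩, (hiff x y hxv hyv).mp hr⟩
  have hcompv_u : G.comp v = G.comp u := FinGraph.comp_eq_of_reach hadjvu.reachable
  rw [FinGraph.ccCount_eq_comp, FinGraph.ccCount_eq_comp]
  have h1 : G.verts.image G.comp = (G.verts.erase v).image G.comp := by
    conv_lhs => rw [← Finset.insert_erase hv]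
    rw [Finset.image_insert, hcompv_u, Finset.insert_eq_self.mpr]
    exact Finset.mem_image_of_mem _ (Finset.mem_erase.mpr ⟨hne, hu⟩)
  have hinj : Set.InjOn (fun A : Finset ℕ => A.erase v) ↑((G.verts.erase v).image G.comp) := by
    intro A hA B hB hAB
    simp only [Finset.coe_image, Set.mem_image, Finset.mem_coe] at hA hB
    obtain ⟨x, hx, rfl⟩ := hA
    obtain ⟨y, hy, rfl⟩ := hB
    have h3 : (G.removeNode v).comp x = (G.removeNode v).comp y := by
      rw [hcomp x hx, hcomp y hy]; exact hAB
    have hxx : x ∈ (G.removeNode v).comp x :=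
      FinGraph.mem_comp.mpr ⟨by rw [hGv]; exact hx, SimpleGraph.Reachable.refl x⟩
    have hxy : x ∈ (G.removeNode v).comp y := h3 ▸ hxx
    have hr : (G.removeNode v).toSimpleGraph.Reachable y x := (FinGraph.mem_comp.mp hxy).2
    exact FinGraph.comp_eq_of_reach ((reach_mono hsub hr).symm)
  have h2 : (G.removeNode v).verts.image (G.removeNode v).comp
      = ((G.verts.erase v).image G.comp).image (fun A => A.erase v) := by
    rw [hGv, Finset.image_image]
    exact Finset.image_congr fun x hx => hcomp x hx
  rw [h1, h2, Finset.card_image_of_injOn hinj]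

lemma reach_removeEdge_cases (G : FinGraph) (u w : ℕ) {x y : ℕ}
    (h : G.toSimpleGraph.Reachable x y) :
    (G.removeEdge s(u, w)).toSimpleGraph.Reachable x y ∨
      ((G.removeEdge s(u, w)).toSimpleGraph.Reachable x u ∧
        (G.removeEdge s(u, w)).toSimpleGraph.Reachable w y) ∨
      ((G.removeEdge s(u, w)).toSimpleGraph.Reachable x w ∧
        (G.removeEdge s(u, w)).toSimpleGraph.Reachable u y) := by
  rw [SimpleGraph.reachable_iff_reflTransGen] at h
  induction h with
  | refl => exact Or.inl (SimpleGraph.Reachable.refl x)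
  | @tail b c hxb hbc ih =>
    by_cases hbc' : s(b, c) = s(u, w)
    · rw [Sym2.eq_iff] at hbc'
      rcases hbc' with ⟨rfl, rfl⟩ | ⟨rfl, rfl⟩
      · rcases ih with h1 | ⟨h1, h2⟩ | ⟨h1, h2⟩
        · exact Or.inr (Or.inl ⟨h1, SimpleGraph.Reachable.refl _⟩)
        · exact Or.inr (Or.inl ⟨h1, SimpleGraph.Reachable.refl _⟩)
        · exact Or.inl h1
      · rcases ih with h1 | ⟨h1, h2⟩ | ⟨h1, h2⟩
        · exact Or.inr (Or.inr ⟨h1, SimpleGraph.Reachable.refl _⟩)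
        · exact Or.inl h1
        · exact Or.inr (Or.inr ⟨h1, SimpleGraph.Reachable.refl _⟩)
    · have hadj : (G.removeEdge s(u, w)).toSimpleGraph.Adj b c :=
        ⟨hbc.1, Finset.mem_erase.mpr ⟨hbc', hbc.2⟩⟩
      rcases ih with h1 | ⟨h1, h2⟩ | ⟨h1, h2⟩
      · exact Or.inl (h1.trans hadj.reachable)
      · exact Or.inr (Or.inl ⟨h1, h2.trans hadj.reachable⟩)
      · exact Or.inr (Or.inr ⟨h1, h2.trans hadj.reachable⟩)

lemma ccCount_removeEdge_reach (G : FinGraph) (u w : ℕ)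
    (hr : (G.removeEdge s(u, w)).toSimpleGraph.Reachable u w) :
    (G.removeEdge s(u, w)).ccCount = G.ccCount := by
  classical
  have hiff : ∀ x y, (G.removeEdge s(u, w)).toSimpleGraph.Reachable x y ↔
      G.toSimpleGraph.Reachable x y := by
    intro x y
    constructor
    · exact reach_mono (Finset.erase_subset _ _)
    · intro h
      rcases reach_removeEdge_cases G u w h with h1 | ⟨h1, h2⟩ | ⟨h1, h2⟩
      · exact h1
      · exact h1.trans (hr.trans h2)
      · exact h1.trans (hr.symm.trans h2)
  have hc : (G.removeEdge s(u, w)).comp = G.comp := by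
    funext x
    unfold FinGraph.comp
    exact Finset.filter_congr fun y _ => hiff x y
  rw [FinGraph.ccCount_eq_comp, FinGraph.ccCount_eq_comp,
    show (G.removeEdge s(u, w)).verts = G.verts from rfl, hc]

lemma ccCount_removeEdge_not_reach (G : FinGraph) (u w : ℕ) (hu : u ∈ G.verts)
    (hw : w ∈ G.verts) (hne : u ≠ w) (he : s(u, w) ∈ G.edges)
    (hr : ¬ (G.removeEdge s(u, w)).toSimpleGraph.Reachable u w) :
    (G.removeEdge s(u, w)).ccCount = G.ccCount + 1 := by
  classical
  have hsub : (G.removeEdge s(u, w)).edges ⊆ G.edges := Finset.erase_subset _ _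
  have hadj : G.toSimpleGraph.Adj u w := ⟨hne, he⟩
  have hadj' : G.toSimpleGraph.Adj w u := hadj.symm
  have hto : ∀ x, G.toSimpleGraph.Reachable x u →
      (G.removeEdge s(u, w)).toSimpleGraph.Reachable x u ∨
      (G.removeEdge s(u, w)).toSimpleGraph.Reachable x w := by
    intro x h
    rcases reach_removeEdge_cases G u w h with h1 | ⟨h1, h2⟩ | ⟨h1, h2⟩
    · exact Or.inl h1
    · exact Or.inl h1
    · exact Or.inr h1
  have hiff : ∀ x, ¬ G.toSimpleGraph.Reachable x u → ∀ y,
      (G.toSimpleGraph.Reachable x y ↔ (G.removeEdge s(u, w)).toSimpleGraph.Reachable x y) := by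
    intro x hx y
    constructor
    · intro h
      rcases reach_removeEdge_cases G u w h with h1 | ⟨h1, h2⟩ | ⟨h1, h2⟩
      · exact h1
      · exact absurd (reach_mono hsub h1) hx
      · exact absurd ((reach_mono hsub h1).trans hadj'.reachable) hx
    · exact reach_mono hsub
  set O := G.verts.filter (fun x => ¬ G.toSimpleGraph.Reachable x u) with hO
  set Rc := G.verts.filter (fun x => G.toSimpleGraph.Reachable x u) with hRc
  have hvertsplit : G.verts = Rc ∪ O :=
    (Finset.filter_union_filter_not_eq (fun x => G.toSimpleGraph.Reachable x u) G.verts).symm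
  have hnotO : ∀ x ∈ O, ¬ G.toSimpleGraph.Reachable x u := by
    intro x hx; exact (Finset.mem_filter.mp hx).2
  have hRcmem : ∀ x ∈ Rc, G.toSimpleGraph.Reachable x u := by
    intro x hx; exact (Finset.mem_filter.mp hx).2
  have huRc : u ∈ Rc := Finset.mem_filter.mpr ⟨hu, SimpleGraph.Reachable.refl u⟩
  have hwRc : w ∈ Rc := Finset.mem_filter.mpr ⟨hw, hadj'.reachable⟩
  have hRcG : Rc.image G.comp = {G.comp u} := by
    apply Finset.Subset.antisymm
    · intro A hA
      obtain ⟨x, hx, rfl⟩ := Finset.mem_image.mp hA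
      exact Finset.mem_singleton.mpr (FinGraph.comp_eq_of_reach (hRcmem x hx).symm).symm
    · rw [Finset.singleton_subset_iff]
      exact Finset.mem_image_of_mem _ huRc
  have hRcG' : Rc.image (G.removeEdge s(u, w)).comp
      = {(G.removeEdge s(u, w)).comp u, (G.removeEdge s(u, w)).comp w} := by
    apply Finset.Subset.antisymm
    · intro A hA
      obtain ⟨x, hx, rfl⟩ := Finset.mem_image.mp hA
      rcases hto x (hRcmem x hx) with h | h
      · exact Finset.mem_insert.mpr (Or.inl (FinGraph.comp_eq_of_reach h.symm).symm)
      · rw [Finset.mem_insert, Finset.mem_singleton]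
        exact Or.inr (FinGraph.comp_eq_of_reach h.symm).symm
    · intro A hA
      rcases Finset.mem_insert.mp hA with rfl | hA2
      · exact Finset.mem_image_of_mem _ huRc
      · rw [Finset.mem_singleton] at hA2
        rw [hA2]
        exact Finset.mem_image_of_mem _ hwRc
  have hOeq : O.image (G.removeEdge s(u, w)).comp = O.image G.comp := by
    apply Finset.image_congr
    intro x hx
    unfold FinGraph.comp
    exact (Finset.filter_congr fun y _ => (hiff x (hnotO x hx) y)).symm
  have hucompu : u ∈ G.comp u := FinGraph.mem_comp.mpr ⟨hu, SimpleGraph.Reachable.refl u⟩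
  have hdisj1 : Disjoint (Rc.image G.comp) (O.image G.comp) := by
    rw [hRcG, Finset.disjoint_singleton_left]
    intro hmem
    obtain ⟨x, hx, hxe⟩ := Finset.mem_image.mp hmem
    have : u ∈ G.comp x := by rw [hxe]; exact hucompu
    exact hnotO x hx (FinGraph.mem_comp.mp this).2
  have hucompu' : u ∈ (G.removeEdge s(u, w)).comp u :=
    FinGraph.mem_comp.mpr ⟨hu, SimpleGraph.Reachable.refl u⟩
  have hwcompw' : w ∈ (G.removeEdge s(u, w)).comp w :=
    FinGraph.mem_comp.mpr ⟨hw, SimpleGraph.Reachable.refl w⟩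
  have hdisj2 : Disjoint ({(G.removeEdge s(u, w)).comp u, (G.removeEdge s(u, w)).comp w} :
      Finset (Finset ℕ)) (O.image (G.removeEdge s(u, w)).comp) := by
    rw [Finset.disjoint_left]
    intro A hA hA'
    obtain ⟨x, hx, hxe⟩ := Finset.mem_image.mp hA'
    rcases Finset.mem_insert.mp hA with rfl | hA2
    · have : u ∈ (G.removeEdge s(u, w)).comp x := by rw [hxe]; exact hucompu'
      exact hnotO x hx (reach_mono hsub (FinGraph.mem_comp.mp this).2)
    · rw [Finset.mem_singleton] at hA2
      rw [hA2] at hxe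
      have : w ∈ (G.removeEdge s(u, w)).comp x := by rw [hxe]; exact hwcompw'
      exact hnotO x hx ((reach_mono hsub (FinGraph.mem_comp.mp this).2).trans hadj'.reachable)
  have hpairne : (G.removeEdge s(u, w)).comp u ≠ (G.removeEdge s(u, w)).comp w := by
    intro h
    have : u ∈ (G.removeEdge s(u, w)).comp w := h ▸ hucompu'
    exact hr (FinGraph.mem_comp.mp this).2.symm
  have e1 : G.ccCount = 1 + (O.image G.comp).card := by
    rw [FinGraph.ccCount_eq_comp]
    conv_lhs => rw [hvertsplit]
    rw [Finset.image_union, Finset.card_union_of_disjoint hdisj1, hRcG, Finset.card_singleton]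
  have e2 : (G.removeEdge s(u, w)).ccCount = 2 + (O.image G.comp).card := by
    rw [FinGraph.ccCount_eq_comp, show (G.removeEdge s(u, w)).verts = G.verts from rfl]
    conv_lhs => rw [hvertsplit]
    rw [Finset.image_union, hRcG', hOeq,
      Finset.card_union_of_disjoint (hOeq ▸ hdisj2), Finset.card_pair hpairne]
  omega

lemma GraphStream.mem_flat_verts {S : GraphStream} {t v : ℕ} :
    v ∈ (S.flat t).verts ↔ ∃ s, s ≤ t ∧ v ∈ S.nodes s := by
  simp [GraphStream.flat, Nat.lt_succ_iff]

lemma GraphStream.mem_flat_edges {S : GraphStream} {t : ℕ} {e : Sym2 ℕ} :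
    e ∈ (S.flat t).edges ↔ ∃ s, s ≤ t ∧ e ∈ S.edges s := by
  simp [GraphStream.flat, Nat.lt_succ_iff]

lemma GraphStream.flat_edges_mono {S : GraphStream} {t t' : ℕ} (h : t ≤ t') :
    (S.flat t).edges ⊆ (S.flat t').edges := by
  intro e he
  rw [GraphStream.mem_flat_edges] at he ⊢
  obtain ⟨s, hs, h2⟩ := he
  exact ⟨s, hs.trans h, h2⟩

lemma GraphStream.flat_removeEdge (S : GraphStream) (e : Sym2 ℕ) (t : ℕ) :
    (S.removeEdge e).flat t = (S.flat t).removeEdge e := by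
  unfold GraphStream.flat GraphStream.removeEdge FinGraph.removeEdge
  congr 1
  ext x
  simp only [Finset.mem_biUnion, Finset.mem_erase]
  tauto

lemma GraphStream.flat_removeNode (S : GraphStream) (v : ℕ) (t : ℕ) :
    (S.removeNode v).flat t = (S.flat t).removeNode v := by
  unfold GraphStream.flat GraphStream.removeNode FinGraph.removeNode
  congr 1
  · ext x
    simp only [Finset.mem_biUnion, Finset.mem_erase]
    tauto
  · ext x
    simp only [Finset.mem_biUnion, Finset.mem_filter]
    tauto

lemma GraphStream.not_mem_flat_edges_of_lt {S : GraphStream} {T : ℕ} (hS : S.Valid T)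
    {e : Sym2 ℕ} {t1 t : ℕ} (he : e ∈ S.edges t1) (ht : t < t1) :
    e ∉ (S.flat t).edges := by
  intro hmem
  rw [GraphStream.mem_flat_edges] at hmem
  obtain ⟨s, hs, hes⟩ := hmem
  exact Finset.disjoint_left.mp (hS.2.2.1 s t1 (by omega)) hes he

lemma tv_bound (T a b : ℕ) (v w : ℤ) (d : ℕ → ℤ) (ha : 1 ≤ a) (hab : a ≤ b)
    (hv : |v| ≤ 1) (hwv : |w - v| ≤ 1)
    (hd : ∀ t, t ≤ T → d t = if t < a then 0 else if t < b then v else w) :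
    ∑ t ∈ Finset.Icc 1 T, |d t - d (t - 1)| ≤ 2 := by
  have key : ∀ t ∈ Finset.Icc 1 T,
      |d t - d (t - 1)| ≤ (if t = a then (1:ℤ) else 0) + (if t = b then (1:ℤ) else 0) := by
    intro t ht
    rw [Finset.mem_Icc] at ht
    rw [hd t ht.2, hd (t - 1) (by omega)]
    rcases lt_trichotomy t a with h | h | h
    · rw [if_pos h, if_pos (by omega : t - 1 < a)]
      have h0 : (0:ℤ) ≤ (if t = a then (1:ℤ) else 0) + (if t = b then (1:ℤ) else 0) := by
        split_ifs <;> norm_num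
      simpa using h0
    · subst h
      rw [if_neg (lt_irrefl _), if_pos (by omega : t - 1 < t)]
      by_cases hb : t < b
      · rw [if_pos hb, if_pos rfl]
        have h0 : (0:ℤ) ≤ (if t = b then (1:ℤ) else 0) := by split_ifs <;> norm_num
        calc |v - 0| = |v| := by rw [sub_zero]
          _ ≤ 1 + if t = b then (1:ℤ) else 0 := by linarith
      · have htb : t = b := by omega
        rw [if_neg hb, if_pos rfl, if_pos htb]
        calc |w - 0| = |v + (w - v)| := by ring_nf
          _ ≤ |v| + |w - v| := abs_add_le _ _
          _ ≤ 1 + 1 := by linarith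
    · rw [if_neg (by omega : ¬ t < a), if_neg (by omega : ¬ t - 1 < a)]
      rcases lt_trichotomy t b with h2 | h2 | h2
      · rw [if_pos h2, if_pos (by omega : t - 1 < b)]
        have h0 : (0:ℤ) ≤ (if t = a then (1:ℤ) else 0) + (if t = b then (1:ℤ) else 0) := by
          split_ifs <;> norm_num
        simpa using h0
      · subst h2
        rw [if_neg (lt_irrefl _), if_pos (by omega : t - 1 < t), if_neg (by omega : ¬ t = a),
          if_pos rfl]
        simpa using hwv
      · rw [if_neg (by omega : ¬ t < b), if_neg (by omega : ¬ t - 1 < b),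
          if_neg (by omega : ¬ t = a), if_neg (by omega : ¬ t = b)]
        simp
  calc ∑ t ∈ Finset.Icc 1 T, |d t - d (t - 1)|
      ≤ ∑ t ∈ Finset.Icc 1 T,
          ((if t = a then (1:ℤ) else 0) + (if t = b then (1:ℤ) else 0)) :=
        Finset.sum_le_sum key
    _ = (∑ t ∈ Finset.Icc 1 T, (if t = a then (1:ℤ) else 0))
        + (∑ t ∈ Finset.Icc 1 T, (if t = b then (1:ℤ) else 0)) := Finset.sum_add_distrib
    _ ≤ 1 + 1 := by
        rw [Finset.sum_ite_eq' (Finset.Icc 1 T) a (fun _ => (1:ℤ)),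
          Finset.sum_ite_eq' (Finset.Icc 1 T) b (fun _ => (1:ℤ))]
        split_ifs <;> norm_num
    _ = 2 := by norm_num

lemma sum_bound_of_removal (T : ℕ) (S S' : GraphStream) (hS : S.Valid T)
    (hrm : edgeRemovalStream T S S') :
    ∑ t ∈ Finset.Icc 1 T,
        |(((S.flat t).ccCount : ℤ) - ((S.flat (t - 1)).ccCount : ℤ))
          - (((S'.flat t).ccCount : ℤ) - ((S'.flat (t - 1)).ccCount : ℤ))| ≤ 2 := by
  have key : ∀ (a b : ℕ) (vv ww : ℤ), 1 ≤ a → a ≤ b → |vv| ≤ 1 → |ww - vv| ≤ 1 →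
      (∀ t, t ≤ T → ((S.flat t).ccCount : ℤ) - ((S'.flat t).ccCount : ℤ)
          = if t < a then 0 else if t < b then vv else ww) →
      ∑ t ∈ Finset.Icc 1 T,
        |(((S.flat t).ccCount : ℤ) - ((S.flat (t - 1)).ccCount : ℤ))
          - (((S'.flat t).ccCount : ℤ) - ((S'.flat (t - 1)).ccCount : ℤ))| ≤ 2 := by
    intro a b vv ww h1 h2 h3 h4 h5
    have heq : ∀ t ∈ Finset.Icc 1 T,
        |(((S.flat t).ccCount : ℤ) - ((S.flat (t - 1)).ccCount : ℤ))
          - (((S'.flat t).ccCount : ℤ) - ((S'.flat (t - 1)).ccCount : ℤ))|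
        = |(fun s => ((S.flat s).ccCount : ℤ) - ((S'.flat s).ccCount : ℤ)) t
            - (fun s => ((S.flat s).ccCount : ℤ) - ((S'.flat s).ccCount : ℤ)) (t - 1)| :=
      fun t _ => congrArg abs (by ring)
    rw [Finset.sum_congr rfl heq]
    exact tv_bound T a b vv ww _ h1 h2 h3 h4 h5
  rcases hrm with ⟨t1, e, het1, rfl⟩ | ⟨v, hv, hdeg, rfl⟩
  · -- edge removal case
    induction e using Sym2.ind with
    | _ u w =>
    have ht1pos : 1 ≤ t1 := (hS.1 t1 (Or.inr ⟨_, het1⟩)).1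
    have hvalid := hS.2.2.2 t1 _ het1
    have hne : u ≠ w := fun h => hvalid.1 (Sym2.mk_isDiag_iff.mpr h)
    have hu : ∀ t, t1 ≤ t → u ∈ (S.flat t).verts := by
      intro t ht
      obtain ⟨s, hs, hx⟩ := hvalid.2 u (Sym2.mem_mk_left u w)
      exact GraphStream.mem_flat_verts.mpr ⟨s, hs.trans ht, hx⟩
    have hw : ∀ t, t1 ≤ t → w ∈ (S.flat t).verts := by
      intro t ht
      obtain ⟨s, hs, hx⟩ := hvalid.2 w (Sym2.mem_mk_right u w)
      exact GraphStream.mem_flat_verts.mpr ⟨s, hs.trans ht, hx⟩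
    have hmem : ∀ t, t1 ≤ t → s(u, w) ∈ (S.flat t).edges :=
      fun t ht => GraphStream.mem_flat_edges.mpr ⟨t1, ht, het1⟩
    have hRmono : ∀ {t t'}, t ≤ t' →
        ((S.flat t).removeEdge s(u, w)).toSimpleGraph.Reachable u w →
        ((S.flat t').removeEdge s(u, w)).toSimpleGraph.Reachable u w := by
      intro t t' h hr
      exact reach_mono (Finset.erase_subset_erase _ (GraphStream.flat_edges_mono h)) hr
    obtain ⟨b0, hb0le, hb0gt⟩ :
        ∃ b0 : ℕ, (∀ t, t ≤ T → b0 ≤ t →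
            ((S.flat t).removeEdge s(u, w)).toSimpleGraph.Reachable u w) ∧
          (∀ t, t < b0 → ¬ ((S.flat t).removeEdge s(u, w)).toSimpleGraph.Reachable u w) := by
      refine ⟨sInf {t | ((S.flat t).removeEdge s(u, w)).toSimpleGraph.Reachable u w ∨ T < t},
        ?_, ?_⟩
      · intro t htT hbt
        have hmem := Nat.sInf_mem (⟨T + 1, Or.inr (Nat.lt_succ_self T)⟩ :
          {t | ((S.flat t).removeEdge s(u, w)).toSimpleGraph.Reachable u w ∨ T < t}.Nonempty)
        rcases hmem with h | h
        · exact hRmono hbt h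
        · omega
      · intro t ht hr
        have hle := Nat.sInf_le (show t ∈
          {t | ((S.flat t).removeEdge s(u, w)).toSimpleGraph.Reachable u w ∨ T < t}
          from Or.inl hr)
        omega
    apply key t1 (max t1 b0) (-1) 0 ht1pos (le_max_left _ _) (by norm_num) (by norm_num)
    intro t htT
    rw [GraphStream.flat_removeEdge]
    by_cases h1 : t < t1
    · rw [if_pos h1]
      have hnot := GraphStream.not_mem_flat_edges_of_lt hS het1 h1
      have hid : (S.flat t).removeEdge s(u, w) = S.flat t := by
        unfold FinGraph.removeEdge
        rw [Finset.erase_eq_of_notMem hnot]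
      rw [hid]
      ring
    · push_neg at h1
      by_cases h2 : t < max t1 b0
      · rw [if_neg (by omega : ¬ t < t1), if_pos h2]
        have hnr : ¬ ((S.flat t).removeEdge s(u, w)).toSimpleGraph.Reachable u w := by
          rcases lt_max_iff.mp h2 with h | h
          · omega
          · exact hb0gt t h
        rw [ccCount_removeEdge_not_reach (S.flat t) u w (hu t h1) (hw t h1) hne (hmem t h1) hnr]
        push_cast
        ring
      · rw [if_neg (by omega : ¬ t < t1), if_neg h2]
        have hrt : ((S.flat t).removeEdge s(u, w)).toSimpleGraph.Reachable u w :=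
          hb0le t htT (le_of_max_le_right (le_of_not_gt h2))
        rw [ccCount_removeEdge_reach (S.flat t) u w hrt]
        ring
  · -- node removal case
    obtain ⟨tv0, hvtv0⟩ := hv
    have hvex : ∃ t, v ∈ (S.flat t).verts :=
      ⟨tv0, GraphStream.mem_flat_verts.mpr ⟨tv0, le_refl _, hvtv0⟩⟩
    obtain ⟨t0, ht0mem, ht0min, ht0le⟩ :
        ∃ t0 : ℕ, v ∈ (S.flat t0).verts ∧ (∀ t, t < t0 → v ∉ (S.flat t).verts) ∧
          (∀ s, v ∈ (S.flat s).verts → t0 ≤ s) := by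
      refine ⟨sInf {t | v ∈ (S.flat t).verts}, Nat.sInf_mem hvex, ?_, ?_⟩
      · intro t ht hm
        have hle := Nat.sInf_le (show t ∈ {t | v ∈ (S.flat t).verts} from hm)
        omega
      · intro s hs
        exact Nat.sInf_le (show s ∈ {t | v ∈ (S.flat t).verts} from hs)
    have hvmono : ∀ {t t'}, t ≤ t' → v ∈ (S.flat t).verts → v ∈ (S.flat t').verts := by
      intro t t' h hm
      rw [GraphStream.mem_flat_verts] at hm ⊢
      obtain ⟨s, hs, h2⟩ := hm
      exact ⟨s, hs.trans h, h2⟩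
    have ht0bounds : 1 ≤ t0 ∧ t0 ≤ T := by
      obtain ⟨s, hs, hns⟩ := GraphStream.mem_flat_verts.mp ht0mem
      have hsT := hS.1 s (Or.inl ⟨v, hns⟩)
      have h2 : t0 ≤ s := ht0le s (GraphStream.mem_flat_verts.mpr ⟨s, le_refl _, hns⟩)
      omega
    rcases Nat.le_one_iff_eq_zero_or_eq_one.mp hdeg with h0 | h1
    · -- degree 0
      have hempty : (S.flat T).edges.filter (fun e => v ∈ e) = ∅ := Finset.card_eq_zero.mp h0
      have hno : ∀ e ∈ (S.flat T).edges, v ∉ e := by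
        intro e he hv'
        have hmem : e ∈ (S.flat T).edges.filter (fun e => v ∈ e) :=
          Finset.mem_filter.mpr ⟨he, hv'⟩
        rw [hempty] at hmem
        exact absurd hmem (Finset.notMem_empty e)
      have hnot : ∀ t, t ≤ T → ∀ e ∈ (S.flat t).edges, v ∉ e :=
        fun t ht e he => hno e (GraphStream.flat_edges_mono ht he)
      apply key t0 (T + 1) 1 1 ht0bounds.1 (by omega) (by norm_num) (by norm_num)
      intro t htT
      rw [GraphStream.flat_removeNode]
      have hfilt : (S.flat t).edges.filter (fun e => v ∉ e) = (S.flat t).edges :=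
        Finset.filter_eq_self.mpr (fun e he => hnot t htT e he)
      by_cases hA : t < t0
      · rw [if_pos hA]
        have hid : (S.flat t).removeNode v = S.flat t := by
          unfold FinGraph.removeNode
          rw [hfilt, Finset.erase_eq_of_notMem (ht0min t hA)]
        rw [hid]
        ring
      · rw [if_neg hA, if_pos (by omega : t < T + 1)]
        have hvt : v ∈ (S.flat t).verts := hvmono (by omega) ht0mem
        have hiso := ccCount_isolated (S.flat t) v hvt (hnot t htT)
        have hrn : (S.flat t).removeNode v
            = FinGraph.mk ((S.flat t).verts.erase v) (S.flat t).edges := by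
          unfold FinGraph.removeNode
          rw [hfilt]
        rw [hrn, hiso]
        push_cast
        ring
    · -- degree 1
      obtain ⟨e, hefilt⟩ := Finset.card_eq_one.mp h1
      have heT : e ∈ (S.flat T).edges ∧ v ∈ e := by
        have hmem : e ∈ (S.flat T).edges.filter (fun e => v ∈ e) := by
          rw [hefilt]; exact Finset.mem_singleton_self e
        exact Finset.mem_filter.mp hmem
      obtain ⟨u, rfl⟩ := Sym2.mem_iff_exists.mp heT.2
      obtain ⟨t1, ht1T, het1⟩ := GraphStream.mem_flat_edges.mp heT.1
      have hval1 := hS.2.2.2 t1 _ het1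
      have hneuv : u ≠ v := fun h => hval1.1 (Sym2.mk_isDiag_iff.mpr h.symm)
      have ht0t1 : t0 ≤ t1 := by
        obtain ⟨s, hs, hns⟩ := hval1.2 v (Sym2.mem_mk_left v u)
        exact le_trans (ht0le s (GraphStream.mem_flat_verts.mpr ⟨s, le_refl _, hns⟩)) hs
      have hut : ∀ t, t1 ≤ t → u ∈ (S.flat t).verts := by
        intro t ht
        obtain ⟨s, hs, hns⟩ := hval1.2 u (Sym2.mem_mk_right v u)
        exact GraphStream.mem_flat_verts.mpr ⟨s, hs.trans ht, hns⟩
      have hsub : ∀ t, t ≤ T → ∀ e' ∈ (S.flat t).edges, v ∈ e' → e' = s(v, u) := by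
        intro t ht e' he' hv'
        have hmem : e' ∈ (S.flat T).edges.filter (fun e => v ∈ e) :=
          Finset.mem_filter.mpr ⟨GraphStream.flat_edges_mono ht he', hv'⟩
        rw [hefilt] at hmem
        exact Finset.mem_singleton.mp hmem
      have hnotbefore : ∀ t, t < t1 → ∀ e' ∈ (S.flat t).edges, v ∉ e' := by
        intro t ht e' he' hv'
        have he'' : e' = s(v, u) := hsub t (by omega) e' he' hv'
        exact GraphStream.not_mem_flat_edges_of_lt hS het1 ht (he'' ▸ he')
      apply key t0 t1 1 0 ht0bounds.1 ht0t1 (by norm_num) (by norm_num)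
      intro t htT
      rw [GraphStream.flat_removeNode]
      by_cases hA : t < t0
      · rw [if_pos hA]
        have hfilt : (S.flat t).edges.filter (fun e => v ∉ e) = (S.flat t).edges :=
          Finset.filter_eq_self.mpr (fun e' he' => hnotbefore t (by omega) e' he')
        have hid : (S.flat t).removeNode v = S.flat t := by
          unfold FinGraph.removeNode
          rw [hfilt, Finset.erase_eq_of_notMem (ht0min t hA)]
        rw [hid]
        ring
      · by_cases hB : t < t1
        · rw [if_neg hA, if_pos hB]
          have hfilt : (S.flat t).edges.filter (fun e => v ∉ e) = (S.flat t).edges :=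
            Finset.filter_eq_self.mpr (fun e' he' => hnotbefore t hB e' he')
          have hvt : v ∈ (S.flat t).verts := hvmono (by omega) ht0mem
          have hiso := ccCount_isolated (S.flat t) v hvt (hnotbefore t hB)
          have hrn : (S.flat t).removeNode v
              = FinGraph.mk ((S.flat t).verts.erase v) (S.flat t).edges := by
            unfold FinGraph.removeNode
            rw [hfilt]
          rw [hrn, hiso]
          push_cast
          ring
        · rw [if_neg hA, if_neg hB]
          push_neg at hB
          have hvt : v ∈ (S.flat t).verts := hvmono (by omega) ht0mem
          have hut' : u ∈ (S.flat t).verts := hut t hB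
          have hdeg' : ∀ e' ∈ (S.flat t).edges, v ∈ e' → e' = s(v, u) := hsub t htT
          have hmem : s(v, u) ∈ (S.flat t).edges :=
            GraphStream.mem_flat_edges.mpr ⟨t1, hB, het1⟩
          rw [ccCount_removeNode_degOne (S.flat t) u v hvt hut' hneuv hdeg' hmem]
          ring

end CCAux


/-- incremental edge-sensitivity of connected-component counts.
For every pair of edge-neighboring insertion-only graph streams `S, S'` of length `T`,
the ℓ₁ distance between the increment sequences of the connected-component counts of
the flattened graphs is at most `2`. -/
theorem cc_incremental_edge_sensitivity (T : ℕ) (S S' : GraphStream)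
    (hS : S.Valid T) (hS' : S'.Valid T) (hnb : edgeNeighborStream T S S') :
    ∑ t ∈ Finset.Icc 1 T,
        |(((S.flat t).ccCount : ℤ) - ((S.flat (t - 1)).ccCount : ℤ))
          - (((S'.flat t).ccCount : ℤ) - ((S'.flat (t - 1)).ccCount : ℤ))| ≤ 2 := by
  rcases hnb with h | h
  · exact sum_bound_of_removal T S S' hS h
  · have h2 := sum_bound_of_removal T S' S hS' h
    have heq : ∀ t ∈ Finset.Icc 1 T,
        |(((S.flat t).ccCount : ℤ) - ((S.flat (t - 1)).ccCount : ℤ))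
          - (((S'.flat t).ccCount : ℤ) - ((S'.flat (t - 1)).ccCount : ℤ))|
        = |(((S'.flat t).ccCount : ℤ) - ((S'.flat (t - 1)).ccCount : ℤ))
          - (((S.flat t).ccCount : ℤ) - ((S.flat (t - 1)).ccCount : ℤ))| :=
      fun t _ => abs_sub_comm _ _
    rw [Finset.sum_congr rfl heq]
    exact h2
end
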